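/- arXiv:0710.3511 — 6 statements merged into one kernel-verified Lean document; each statement's English description precedes it below -/
import Mathlib

section
/- Let n ≥ 1 and let π be a group such that the second group cohomology H²(π, ℤ/nℤ) of π with coefficients in the trivial π-module ℤ/nℤ vanishes. Then for every group homomorphism η : π → ℂ* there exists a group homomorphism η̃ : π → ℂ* such that (η̃(γ))ⁿ = η(γ) for all γ ∈ π. -/
/-- If `n ≥ 1` and the second group cohomology of `π` with coefficients in the trivial
`π`-module `ℤ/nℤ` vanishes, then every homomorphism `η : π → ℂ*` admits an `n`-th root
which is again a homomorphism. -/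
theorem exists_nth_root_of_homomorphism (n : ℕ) (hn : 1 ≤ n) (π : Type) [Group π]
    (hH2 : Subsingleton (groupCohomology (Rep.trivial (ZMod n) π (ZMod n)) 2))
    (η : π →* ℂˣ) :
    ∃ ηtilde : π →* ℂˣ, ∀ γ : π, (ηtilde γ) ^ n = η γ := by
  haveI : NeZero n := ⟨by omega⟩
  set A := Rep.trivial (ZMod n) π (ZMod n) with hA
  -- a primitive n-th root of unity as a unit
  have hζ : IsPrimitiveRoot (Complex.exp (2 * Real.pi * Complex.I / n)) n :=
    Complex.isPrimitiveRoot_exp n (NeZero.ne n)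
  set ζ : ℂ := Complex.exp (2 * Real.pi * Complex.I / n) with hζdef
  have hζne : ζ ≠ 0 := Complex.exp_ne_zero _
  set ζu : ℂˣ := Units.mk0 ζ hζne with hζu
  have hζun : ζu ^ n = 1 := by
    ext
    simpa [hζu] using hζ.pow_eq_one
  -- the embedding φ : ZMod n → ℂˣ
  set φ : ZMod n → ℂˣ := fun x => ζu ^ x.val with hφ
  have hφval : ∀ x : ZMod n, ((φ x : ℂˣ) : ℂ) = ζ ^ x.val := fun x => by
    simp [hφ, hζu]
  have hφadd : ∀ x y : ZMod n, φ (x + y) = φ x * φ y := by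
    intro x y
    simp only [hφ, ZMod.val_add, ← pow_add]
    exact (pow_eq_pow_mod _ hζun).symm
  have hφn : ∀ x : ZMod n, (φ x) ^ n = 1 := by
    intro x
    show (ζu ^ x.val) ^ n = 1
    rw [← pow_mul, mul_comm, pow_mul, hζun, one_pow]
  have hφinj : Function.Injective φ := by
    intro x y hxy
    have : ζ ^ x.val = ζ ^ y.val := by
      rw [← hφval, ← hφval, hxy]
    have := hζ.pow_inj x.val_lt y.val_lt this
    exact ZMod.val_injective n this
  have hφsurj : ∀ u : ℂˣ, u ^ n = 1 → ∃ x : ZMod n, φ x = u := by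
    intro u hu
    have hu' : (u : ℂ) ^ n = 1 := by
      rw [← Units.val_pow_eq_pow_val, hu, Units.val_one]
    obtain ⟨i, hi, hiu⟩ := hζ.eq_pow_of_pow_eq_one hu'
    refine ⟨(i : ZMod n), ?_⟩
    have h1 : φ (i : ZMod n) = ζu ^ i := by
      show ζu ^ (ZMod.val (i : ZMod n)) = ζu ^ i
      rw [ZMod.val_natCast]
      exact (pow_eq_pow_mod i hζun).symm
    ext
    rw [h1]
    simpa [hζu] using hiu
  have hφsub : ∀ x y : ZMod n, φ (x - y) = φ x * (φ y)⁻¹ := by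
    intro x y
    have := hφadd (x - y) y
    rw [sub_add_cancel] at this
    rw [this]; group
  -- choose n-th roots pointwise
  have hsur : ∀ u : ℂˣ, ∃ w : ℂˣ, w ^ n = u := by
    intro u
    obtain ⟨z, hz⟩ := IsAlgClosed.exists_pow_nat_eq (u : ℂ) (by omega : 0 < n)
    have hz0 : z ≠ 0 := by
      intro h; rw [h] at hz; simp [zero_pow (by omega : n ≠ 0)] at hz
      exact u.ne_zero hz.symm
    exact ⟨Units.mk0 z hz0, by ext; simpa using hz⟩
  choose s hs using fun γ => hsur (η γ)
  -- the defect cocycle with values in n-th roots of unity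
  set c : π → π → ℂˣ := fun g h => s g * s h * (s (g * h))⁻¹ with hc
  have hcn : ∀ g h : π, (c g h) ^ n = 1 := by
    intro g h
    simp only [hc, mul_pow, inv_pow, hs, ← map_mul]
    group
  choose a ha using fun g h => hφsurj (c g h) (hcn g h)
  -- c satisfies the multiplicative 2-cocycle identity
  have hckey : ∀ g h j : π, c (g * h) j * c g h = c h j * c g (h * j) := by
    intro g h j
    ext
    simp only [hc, Units.val_mul, Units.val_inv_eq_inv_val, mul_assoc]
    field_simp
  -- a is a 2-cocycle for the trivial representation
  have hacocycle : (fun p : π × π => a p.1 p.2) ∈ groupCohomology.cocycles₂ A := by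
    rw [groupCohomology.mem_cocycles₂_iff]
    intro g h j
    apply hφinj
    have triv : A.ρ g (a h j) = a h j := Rep.trivial_ρ_apply g (a h j)
    simp only [triv, hφadd, ha]
    exact hckey g h j
  set F : groupCohomology.cocycles₂ A := ⟨_, hacocycle⟩ with hF
  -- H² vanishing: F is a coboundary
  haveI : Subsingleton (groupCohomology.H2 A) := hH2
  have hFcob : ⇑F ∈ groupCohomology.coboundaries₂ A := by
    rw [← groupCohomology.H2π_eq_zero_iff]
    exact Subsingleton.elim _ _
  obtain ⟨b, hb⟩ := hFcob
  have hb' : ∀ g h : π, b h - b (g * h) + b g = a g h := by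
    intro g h
    have := congrFun hb (g, h)
    rw [groupCohomology.d₁₂_hom_apply] at this
    rwa [Rep.trivial_ρ_apply] at this
  -- the corrected root
  refine ⟨MonoidHom.mk' (fun γ => s γ * (φ (b γ))⁻¹) ?_, ?_⟩
  · intro g h
    have hcgh : s g * s h = φ (a g h) * s (g * h) := by
      rw [ha]
      simp only [hc]
      group
    have haφ : φ (a g h) = φ (b h) * (φ (b (g * h)))⁻¹ * φ (b g) := by
      rw [← hb' g h, hφadd, hφsub]
    rw [haφ] at hcgh
    have hC := congrArg (Units.val) hcgh
    simp only [Units.val_mul, Units.val_inv_eq_inv_val] at hC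
    ext
    simp only [Units.val_mul, Units.val_inv_eq_inv_val]
    field_simp at hC ⊢
    linear_combination -hC
  · intro γ
    simp only [MonoidHom.mk'_apply, mul_pow, inv_pow, hφn, inv_one, mul_one, hs]
end

section
/- Let α, β ∈ ℂ with β ≠ 0 and α ≠ 1, and let A : ℂ → M(3,ℂ) be a matrix-valued map each of whose nine entries is analytic at 0, with A(0) = β·[[α,0,0],[0,1,1],[0,0,1]] (rows (βα,0,0), (0,β,β), (0,0,β)). Then there exist ε > 0 and a matrix-valued map C : ℂ → M(3,ℂ), with all entries analytic at 0, such that C(0) = I, det C(t) = 1 for all |t| < ε, and for all t with |t| < ε the conjugated matrix C(t)·A(t)·C(t)⁻¹ has vanishing (1,2), (1,3), (2,1) and (3,1) entries, i.e., it has the block form [[a₁₁(t),0,0],[0,a₂₂(t),a₂₃(t)],[0,a₃₂(t),a₃₃(t)]]. -/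
open Matrix Filter ContinuousLinearMap
noncomputable section
abbrev E3 := ℂ × ℂ × ℂ
def pi0 : E3 →L[ℂ] ℂ := fst ℂ ℂ (ℂ × ℂ)
def pi1 : E3 →L[ℂ] ℂ := (fst ℂ ℂ ℂ).comp (snd ℂ ℂ (ℂ × ℂ))
def pi2 : E3 →L[ℂ] ℂ := (snd ℂ ℂ ℂ).comp (snd ℂ ℂ (ℂ × ℂ))

def myEquiv (φ ψ : ℂ →L[ℂ] ℂ) (m11 m12 m21 m22 : ℂ) (hΔ : m11*m22 - m12*m21 ≠ 0) :
    E3 ≃L[ℂ] E3 :=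
  LinearEquiv.toContinuousLinearEquiv
  { toFun := fun z => (z.1, φ z.1 + m11*z.2.1 + m12*z.2.2, ψ z.1 + m21*z.2.1 + m22*z.2.2)
    invFun := fun z => (z.1,
      (m22*(z.2.1 - φ z.1) - m12*(z.2.2 - ψ z.1))/(m11*m22 - m12*m21),
      (m11*(z.2.2 - ψ z.1) - m21*(z.2.1 - φ z.1))/(m11*m22 - m12*m21))
    map_add' := by
      intro a b
      refine Prod.ext rfl (Prod.ext ?_ ?_) <;>
        (simp only [Prod.fst_add, Prod.snd_add, map_add]; ring)
    map_smul' := by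
      intro c a
      have hφ : ∀ (c w : ℂ), φ (c*w) = c * φ w := fun c w => by
        simpa [smul_eq_mul] using φ.map_smul c w
      have hψ : ∀ (c w : ℂ), ψ (c*w) = c * ψ w := fun c w => by
        simpa [smul_eq_mul] using ψ.map_smul c w
      refine Prod.ext rfl (Prod.ext ?_ ?_) <;>
        (simp only [Prod.smul_fst, Prod.smul_snd, smul_eq_mul, RingHom.id_apply, hφ, hψ]; ring)
    left_inv := by
      intro z
      refine Prod.ext rfl (Prod.ext ?_ ?_)
      · dsimp only
        linear_combination z.2.1 * mul_inv_cancel₀ hΔ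
      · dsimp only
        linear_combination z.2.2 * mul_inv_cancel₀ hΔ
    right_inv := by
      intro z
      refine Prod.ext rfl (Prod.ext ?_ ?_)
      · dsimp only
        linear_combination (z.2.1 - φ z.1) * mul_inv_cancel₀ hΔ
      · dsimp only
        linear_combination (z.2.2 - ψ z.1) * mul_inv_cancel₀ hΔ }

lemma myEquiv_apply (φ ψ : ℂ →L[ℂ] ℂ) (m11 m12 m21 m22 : ℂ) (hΔ : m11*m22 - m12*m21 ≠ 0)
    (z : E3) : (myEquiv φ ψ m11 m12 m21 m22 hΔ : E3 →L[ℂ] E3) z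
      = (z.1, φ z.1 + m11*z.2.1 + m12*z.2.2, ψ z.1 + m21*z.2.1 + m22*z.2.2) := rfl

lemma eigenvector_helper (A : ℂ → Matrix (Fin 3) (Fin 3) ℂ)
    (hA : ∀ i j : Fin 3, AnalyticAt ℂ (fun t => A t i j) 0)
    (h10 : A 0 1 0 = 0) (h20 : A 0 2 0 = 0)
    (hdet : (A 0 1 1 - A 0 0 0) * (A 0 2 2 - A 0 0 0) - A 0 1 2 * A 0 2 1 ≠ 0) :
    ∃ x y : ℂ → ℂ, AnalyticAt ℂ x 0 ∧ AnalyticAt ℂ y 0 ∧ x 0 = 0 ∧ y 0 = 0 ∧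
      ∀ᶠ t in nhds (0:ℂ),
        A t 1 0 + A t 1 1 * x t + A t 1 2 * y t
          = (A t 0 0 + A t 0 1 * x t + A t 0 2 * y t) * x t ∧
        A t 2 0 + A t 2 1 * x t + A t 2 2 * y t
          = (A t 0 0 + A t 0 1 * x t + A t 0 2 * y t) * y t := by
  -- entry functions on E3
  set F2 : E3 → ℂ := fun z => A z.1 1 0 + A z.1 1 1 * z.2.1 + A z.1 1 2 * z.2.2
      - (A z.1 0 0 + A z.1 0 1 * z.2.1 + A z.1 0 2 * z.2.2) * z.2.1 with hF2
  set F3 : E3 → ℂ := fun z => A z.1 2 0 + A z.1 2 1 * z.2.1 + A z.1 2 2 * z.2.2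
      - (A z.1 0 0 + A z.1 0 1 * z.2.1 + A z.1 0 2 * z.2.2) * z.2.2 with hF3
  set G : E3 → E3 := fun z => (z.1, F2 z, F3 z) with hG
  have hG0 : G 0 = 0 := by
    simp [hG, hF2, hF3, h10, h20]
  -- analyticity
  have haij : ∀ i j : Fin 3, AnalyticAt ℂ (fun z : E3 => A z.1 i j) 0 := by
    intro i j
    have hfst : AnalyticAt ℂ (Prod.fst : E3 → ℂ) 0 := analyticAt_fst
    exact AnalyticAt.comp (x := (0:E3)) (g := fun t => A t i j) (f := Prod.fst)
      (by simpa using hA i j) hfst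
  have hπ1a : AnalyticAt ℂ (fun z : E3 => z.2.1) 0 := pi1.analyticAt 0
  have hπ2a : AnalyticAt ℂ (fun z : E3 => z.2.2) 0 := pi2.analyticAt 0
  have hF2a : AnalyticAt ℂ F2 0 :=
    (((haij 1 0).add ((haij 1 1).mul hπ1a)).add ((haij 1 2).mul hπ2a)).sub
      ((((haij 0 0).add ((haij 0 1).mul hπ1a)).add ((haij 0 2).mul hπ2a)).mul hπ1a)
  have hF3a : AnalyticAt ℂ F3 0 :=
    (((haij 2 0).add ((haij 2 1).mul hπ1a)).add ((haij 2 2).mul hπ2a)).sub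
      ((((haij 0 0).add ((haij 0 1).mul hπ1a)).add ((haij 0 2).mul hπ2a)).mul hπ2a)
  have hGa : AnalyticAt ℂ G 0 := analyticAt_fst.prod (hF2a.prod hF3a)
  -- strict derivatives
  have hent : ∀ i j : Fin 3, HasStrictFDerivAt (fun z : E3 => A z.1 i j)
      ((fderiv ℂ (fun t => A t i j) 0).comp pi0) 0 :=
    fun i j => HasStrictFDerivAt.comp (x := (0:E3)) (g := fun t => A t i j)
      (f := fun z : E3 => z.1) (by simpa using (hA i j).hasStrictFDerivAt)
      pi0.hasStrictFDerivAt
  have hπ1 : HasStrictFDerivAt (fun z : E3 => z.2.1) pi1 0 := pi1.hasStrictFDerivAt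
  have hπ2 : HasStrictFDerivAt (fun z : E3 => z.2.2) pi2 0 := pi2.hasStrictFDerivAt
  have hD2 := (((hent 1 0).add ((hent 1 1).mul hπ1)).add ((hent 1 2).mul hπ2)).sub
      ((((hent 0 0).add ((hent 0 1).mul hπ1)).add ((hent 0 2).mul hπ2)).mul hπ1)
  have hD3 := (((hent 2 0).add ((hent 2 1).mul hπ1)).add ((hent 2 2).mul hπ2)).sub
      ((((hent 0 0).add ((hent 0 1).mul hπ1)).add ((hent 0 2).mul hπ2)).mul hπ2)
  have hDG := (hasStrictFDerivAt_fst (𝕜 := ℂ) (p := (0 : E3))).prodMk (hD2.prodMk hD3)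
  set φ := fderiv ℂ (fun t => A t 1 0) 0 with hφ
  set ψ := fderiv ℂ (fun t => A t 2 0) 0 with hψ
  set Leq := myEquiv φ ψ (A 0 1 1 - A 0 0 0) (A 0 1 2) (A 0 2 1) (A 0 2 2 - A 0 0 0) hdet
    with hLeq
  have hkey : ∀ (D : E3 →L[ℂ] E3), HasStrictFDerivAt G D 0 → D = ↑Leq →
      HasStrictFDerivAt G (↑Leq : E3 →L[ℂ] E3) 0 := fun D h he => he ▸ h
  have hGs : HasStrictFDerivAt G (↑Leq : E3 →L[ℂ] E3) 0 := by
    apply hkey _ hDG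
    apply ContinuousLinearMap.ext
    intro z
    rw [hLeq, myEquiv_apply]
    simp only [ContinuousLinearMap.prod_apply, ContinuousLinearMap.add_apply,
      ContinuousLinearMap.coe_comp', Function.comp_apply, ContinuousLinearMap.smul_apply,
      ContinuousLinearMap.coe_sub', Pi.sub_apply, ContinuousLinearMap.coe_fst',
      Prod.fst_zero, Prod.snd_zero, smul_eq_mul]
    refine Prod.ext rfl (Prod.ext ?_ ?_) <;>
      (show _ = _ ; simp [pi0, pi1, pi2, h10, h20]; ring)
  set PH := hGs.toOpenPartialHomeomorph G with hPHdef
  have h0src : (0:E3) ∈ PH.source := hGs.mem_toOpenPartialHomeomorph_source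
  have hPHcoe : (⇑PH : E3 → E3) = G := rfl
  have hPH0 : PH 0 = 0 := hG0
  obtain ⟨pG, hpG⟩ := hGa
  have hfd1 : HasFDerivAt G (continuousMultilinearCurryFin1 ℂ E3 E3 (pG 1)) 0 := hpG.hasFDerivAt
  have hfd2 : HasFDerivAt G (↑Leq : E3 →L[ℂ] E3) 0 := hGs.hasFDerivAt
  have hp1 : pG 1 = (continuousMultilinearCurryFin1 ℂ E3 E3).symm ↑Leq := by
    have h := hfd1.unique hfd2
    rw [← h]
    simp
  have hpGPH : HasFPowerSeriesAt (⇑PH) pG 0 := hpG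
  have hsymm := PH.hasFPowerSeriesAt_symm h0src hpGPH hp1
  rw [hPH0] at hsymm
  have hsymma : AnalyticAt ℂ (⇑PH.symm) 0 := ⟨_, hsymm⟩
  have hcurve : AnalyticAt ℂ (fun t : ℂ => ((t, 0, 0) : E3)) 0 :=
    analyticAt_id.prod analyticAt_const
  have hu : AnalyticAt ℂ (fun t : ℂ => PH.symm (t, 0, 0)) 0 :=
    AnalyticAt.comp (x := (0:ℂ)) (by exact hsymma) hcurve
  have hu0 : PH.symm ((0:ℂ), (0:ℂ), (0:ℂ)) = 0 := by
    have h := PH.left_inv h0src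
    rw [hPH0] at h
    exact h
  refine ⟨fun t => (PH.symm (t,0,0)).2.1, fun t => (PH.symm (t,0,0)).2.2,
    (pi1.analyticAt _).comp hu, (pi2.analyticAt _).comp hu,
    by show (PH.symm ((0:ℂ),(0:ℂ),(0:ℂ))).2.1 = 0; rw [hu0]; rfl,
    by show (PH.symm ((0:ℂ),(0:ℂ),(0:ℂ))).2.2 = 0; rw [hu0]; rfl, ?_⟩
  have htgt : ∀ᶠ t : ℂ in nhds 0, ((t,0,0) : E3) ∈ PH.target := by
    have hc : ContinuousAt (fun t : ℂ => ((t,0,0):E3)) 0 := by fun_prop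
    have hmem : (0 : E3) ∈ PH.target := by
      have h := PH.map_source h0src
      rwa [hPH0] at h
    exact hc (PH.open_target.mem_nhds hmem)
  filter_upwards [htgt] with t ht
  have hGu : G (PH.symm (t,0,0)) = (t,0,0) := PH.right_inv ht
  have h1 : (PH.symm ((t:ℂ),(0:ℂ),(0:ℂ))).1 = t := congrArg Prod.fst hGu
  have h2 : F2 (PH.symm (t,0,0)) = 0 := by
    have := congrArg (fun z : E3 => z.2.1) hGu
    simpa [hG] using this
  have h3 : F3 (PH.symm (t,0,0)) = 0 := by
    have := congrArg (fun z : E3 => z.2.2) hGu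
    simpa [hG] using this
  simp only [hF2] at h2
  simp only [hF3] at h3
  rw [h1] at h2
  rw [h1] at h3
  exact ⟨by linear_combination h2, by linear_combination h3⟩


/-- Paper's Lemma 4 (lem:eigen): if `A : ℂ → M(3,ℂ)` has entries analytic at `0` and
`A(0) = β·[[α,0,0],[0,1,1],[0,0,1]]` with `β ≠ 0`, `α ≠ 1`, then there is an analytic curve
`C(t)` of determinant-one matrices with `C(0) = I` conjugating `A(t)` into block form
`[[a₁₁,0,0],[0,a₂₂,a₂₃],[0,a₃₂,a₃₃]]` for all small `t`. -/
theorem exists_analytic_conjugation_to_block_form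
    (α β : ℂ) (hβ : β ≠ 0) (hα : α ≠ 1)
    (A : ℂ → Matrix (Fin 3) (Fin 3) ℂ)
    (hA : ∀ i j : Fin 3, AnalyticAt ℂ (fun t => A t i j) 0)
    (hA0 : A 0 = β • !![α, 0, 0; 0, 1, 1; 0, 0, 1]) :
    ∃ (ε : ℝ) (C : ℂ → Matrix (Fin 3) (Fin 3) ℂ), 0 < ε ∧
      (∀ i j : Fin 3, AnalyticAt ℂ (fun t => C t i j) 0) ∧
      C 0 = 1 ∧
      (∀ t : ℂ, ‖t‖ < ε → (C t).det = 1) ∧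
      (∀ t : ℂ, ‖t‖ < ε →
        (C t * A t * (C t)⁻¹) 0 1 = 0 ∧ (C t * A t * (C t)⁻¹) 0 2 = 0 ∧
        (C t * A t * (C t)⁻¹) 1 0 = 0 ∧ (C t * A t * (C t)⁻¹) 2 0 = 0) := by
  have hne : β - β * α ≠ 0 := by
    intro h
    have h2 : β * (1 - α) = 0 := by linear_combination h
    rcases mul_eq_zero.mp h2 with h' | h'
    · exact hβ h'
    · exact hα (by linear_combination -h')
  -- entries of A 0
  have hE : ∀ i j : Fin 3, A 0 i j = β * !![α, 0, 0; 0, 1, 1; 0, 0, 1] i j := by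
    intro i j; rw [hA0]; simp
  obtain ⟨x, y, hxA, hyA, hx0, hy0, hR⟩ := eigenvector_helper A hA
    (by rw [hE]; norm_num [Matrix.cons_val_zero, Matrix.cons_val_one, Matrix.head_cons,
      Matrix.cons_val_two, Matrix.tail_cons, Matrix.vecHead, Matrix.vecTail])
    (by rw [hE]; norm_num [Matrix.cons_val_zero, Matrix.cons_val_one, Matrix.head_cons,
      Matrix.cons_val_two, Matrix.tail_cons, Matrix.vecHead, Matrix.vecTail])
    (by simp only [hE]
        norm_num [Matrix.cons_val_zero, Matrix.cons_val_one, Matrix.head_cons,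
          Matrix.cons_val_two, Matrix.tail_cons, Matrix.vecHead, Matrix.vecTail]
        exact hne)
  obtain ⟨p, q, hpA, hqA, hp0, hq0, hS⟩ := eigenvector_helper (fun t => (A t)ᵀ)
    (fun i j => hA j i)
    (by simp only [Matrix.transpose_apply]
        rw [hE]; norm_num [Matrix.cons_val_zero, Matrix.cons_val_one, Matrix.head_cons,
          Matrix.cons_val_two, Matrix.tail_cons, Matrix.vecHead, Matrix.vecTail])
    (by simp only [Matrix.transpose_apply]
        rw [hE]; norm_num [Matrix.cons_val_zero, Matrix.cons_val_one, Matrix.head_cons,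
          Matrix.cons_val_two, Matrix.tail_cons, Matrix.vecHead, Matrix.vecTail])
    (by simp only [Matrix.transpose_apply, hE]
        norm_num [Matrix.cons_val_zero, Matrix.cons_val_one, Matrix.head_cons,
          Matrix.cons_val_two, Matrix.tail_cons, Matrix.vecHead, Matrix.vecTail]
        exact hne)
  -- normalizing factor
  have hgA : AnalyticAt ℂ (fun t => 1 + p t * x t + q t * y t) 0 :=
    (analyticAt_const.add (hpA.mul hxA)).add (hqA.mul hyA)
  have hg0 : (1 + p 0 * x 0 + q 0 * y 0 : ℂ) = 1 := by simp [hx0, hp0, hq0, hy0]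
  obtain ⟨s, hsA, hs0, hsmul⟩ : ∃ s : ℂ → ℂ, AnalyticAt ℂ s 0 ∧ s 0 = 1 ∧
      ∀ᶠ t in nhds (0:ℂ), s t * (1 + p t * x t + q t * y t) = 1 := by
    refine ⟨fun t => (1 + p t * x t + q t * y t)⁻¹, hgA.inv (by rw [hg0]; exact one_ne_zero),
      by simp [hx0, hp0, hq0, hy0], ?_⟩
    have hg_ne : ∀ᶠ t in nhds (0:ℂ), (1 + p t * x t + q t * y t) ≠ 0 :=
      hgA.continuousAt.eventually_ne (by rw [hg0]; exact one_ne_zero)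
    filter_upwards [hg_ne] with t hgt
    exact inv_mul_cancel₀ hgt
  -- the conjugating matrix (adjugate of Nm) and its inverse Nm
  set Cm : ℂ → Matrix (Fin 3) (Fin 3) ℂ := fun t =>
    !![1, p t, q t;
       -(s t * x t), s t + q t * (s t * y t), -(q t * (s t * x t));
       -(s t * y t), -(p t * (s t * y t)), s t + p t * (s t * x t)] with hCm
  set Nm : ℂ → Matrix (Fin 3) (Fin 3) ℂ := fun t =>
    !![s t, -(p t), -(q t); s t * x t, 1, 0; s t * y t, 0, 1] with hNm
  have hCa : ∀ i j : Fin 3, AnalyticAt ℂ (fun t => Cm t i j) 0 := by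
    intro i j
    fin_cases i <;> fin_cases j <;> simp [hCm] <;>
      first
      | exact analyticAt_const
      | exact hpA
      | exact hqA
      | exact (hsA.mul hxA).neg
      | exact (hsA.mul hyA).neg
      | exact hsA.add (hqA.mul (hsA.mul hyA))
      | exact (hqA.mul (hsA.mul hxA)).neg
      | exact (hpA.mul (hsA.mul hyA)).neg
      | exact hsA.add (hpA.mul (hsA.mul hxA))
  have hC0 : Cm 0 = 1 := by
    ext i j
    fin_cases i <;> fin_cases j <;>
      simp [hCm, hx0, hy0, hp0, hq0, hs0, Matrix.one_apply, Matrix.vecHead, Matrix.vecTail]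
  have key : ∀ᶠ t in nhds (0:ℂ), (Cm t).det = 1 ∧
      ((Cm t * A t * (Cm t)⁻¹) 0 1 = 0 ∧ (Cm t * A t * (Cm t)⁻¹) 0 2 = 0 ∧
       (Cm t * A t * (Cm t)⁻¹) 1 0 = 0 ∧ (Cm t * A t * (Cm t)⁻¹) 2 0 = 0) := by
    filter_upwards [hR, hS, hsmul] with t hRt hSt hs1
    obtain ⟨hR1, hR2⟩ := hRt
    obtain ⟨hS1, hS2⟩ := hSt
    simp only [Matrix.transpose_apply] at hS1 hS2
    have hNC : Nm t * Cm t = 1 := by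
      ext i j
      fin_cases i <;> fin_cases j <;>
        (simp [hCm, hNm, Matrix.mul_apply, Fin.sum_univ_three, Matrix.one_apply,
          Matrix.vecHead, Matrix.vecTail] <;> first | ring1 | linear_combination hs1 | linear_combination -hs1)
    have hdet1 : (Cm t).det = 1 := by
      have := congrArg Matrix.det hNC
      rw [Matrix.det_mul, Matrix.det_one] at this
      have hdN : (Nm t).det = 1 := by
        simp [hNm, Matrix.det_fin_three, Matrix.vecHead, Matrix.vecTail]
        linear_combination hs1
      rw [hdN, one_mul] at this
      exact this
    have hinv : (Cm t)⁻¹ = Nm t := Matrix.inv_eq_left_inv hNC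
    refine ⟨hdet1, ?_, ?_, ?_, ?_⟩ <;> rw [hinv]
    · simp [hCm, hNm, Matrix.mul_apply, Matrix.vecMul, dotProduct, Fin.sum_univ_three,
        Matrix.vecHead, Matrix.vecTail]
      linear_combination hS1
    · simp [hCm, hNm, Matrix.mul_apply, Matrix.vecMul, dotProduct, Fin.sum_univ_three,
        Matrix.vecHead, Matrix.vecTail]
      linear_combination hS2
    · simp [hCm, hNm, Matrix.mul_apply, Matrix.vecMul, dotProduct, Fin.sum_univ_three,
        Matrix.vecHead, Matrix.vecTail]
      linear_combination (s t^2 + s t^2 * q t * y t) * hR1 - (s t^2 * q t * x t) * hR2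
    · simp [hCm, hNm, Matrix.mul_apply, Matrix.vecMul, dotProduct, Fin.sum_univ_three,
        Matrix.vecHead, Matrix.vecTail]
      linear_combination (-(s t^2 * p t * y t)) * hR1 + (s t^2 + s t^2 * p t * x t) * hR2
  rw [Metric.eventually_nhds_iff_ball] at key
  obtain ⟨ε, hε, hkey⟩ := key
  exact ⟨ε, Cm, hε, hCa, hC0,
    fun t ht => (hkey t (mem_ball_zero_iff.mpr ht)).1,
    fun t ht => (hkey t (mem_ball_zero_iff.mpr ht)).2⟩
end
end

section
/- Let α, β, b, c ∈ ℂ with β ≠ 0, α ≠ 0, α ≠ 1 and b ≠ 0. Let A, B : ℂ → M(3,ℂ) be matrix-valued maps, all of whose entries are analytic at 0, such that: (i) for every t, the (1,2), (1,3), (2,1) and (3,1) entries of A(t) vanish, i.e., A(t) = [[a₁₁(t),0,0],[0,a₂₂(t),a₂₃(t)],[0,a₃₂(t),a₃₃(t)]]; (ii) A(0) = β·[[α,0,0],[0,1,1],[0,0,1]]; (iii) B(0) = β·[[α,b,c],[0,1,1],[0,0,1]]; (iv) the derivative at t = 0 of the (3,1) entry of B(t) is nonzero. Then there exists ε > 0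 such that for every t with 0 < |t| < ε, the unital ℂ-subalgebra of M(3,ℂ) generated by the two matrices A(t) and B(t) is all of M(3,ℂ). -/
set_option maxHeartbeats 1000000

open Filter Matrix Topology

private lemma aux_span_top (S : Subalgebra ℂ (Matrix (Fin 3) (Fin 3) ℂ))
    (m : Fin 9 → Matrix (Fin 3) (Fin 3) ℂ)
    (hmem : ∀ k, m k ∈ S) (hli : LinearIndependent ℂ m) : S = ⊤ := by
  have hcard : Fintype.card (Fin 9) = Module.finrank ℂ (Matrix (Fin 3) (Fin 3) ℂ) := by
    simp [Module.finrank_matrix]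
  have hsp := hli.span_eq_top_of_card_eq_finrank hcard
  have hle : Submodule.span ℂ (Set.range m) ≤ Subalgebra.toSubmodule S :=
    Submodule.span_le.mpr (Set.range_subset_iff.mpr hmem)
  rw [eq_top_iff]
  intro x _
  exact hle (hsp ▸ Submodule.mem_top)

private lemma aux_eps {Q : ℂ → Prop} (h : ∀ᶠ t in 𝓝[≠] (0:ℂ), Q t) :
    ∃ ε > (0:ℝ), ∀ t : ℂ, 0 < ‖t‖ → ‖t‖ < ε → Q t := by
  rw [eventually_nhdsWithin_iff, Metric.eventually_nhds_iff] at h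
  obtain ⟨ε, hε, h⟩ := h
  exact ⟨ε, hε, fun t h1 h2 => h (by rwa [dist_zero_right]) (by simpa using norm_pos_iff.mp h1)⟩

private lemma aux_slope {g : ℂ → ℂ} (hg : AnalyticAt ℂ g 0) (h0 : g 0 = 0) :
    Filter.Tendsto (fun t => g t / t) (𝓝[≠] (0:ℂ)) (𝓝 (deriv g 0)) := by
  have h := hg.differentiableAt.hasDerivAt
  rw [hasDerivAt_iff_tendsto_slope] at h
  refine h.congr fun t => ?_
  rw [slope_def_field, h0, sub_zero, sub_zero]

private lemma aux_sum_nine {M : Type*} [AddCommMonoid M] (f : Fin 9 → M) :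
    ∑ i, f i = f 0 + f 1 + f 2 + f 3 + f 4 + f 5 + f 6 + f 7 + f 8 := by
  rw [Fin.sum_univ_castSucc, Fin.sum_univ_eight]
  rfl

/-- Paper's Proposition 7 (prop:irred): analytic curves `A(t)`, `B(t)` of `3×3` matrices with
`A(t)` in block form, `A(0) = β·[[α,0,0],[0,1,1],[0,0,1]]`, `B(0) = β·[[α,b,c],[0,1,1],[0,0,1]]`
(`b ≠ 0`) and nonzero derivative of the `(3,1)` entry of `B` at `0`, generate the full matrix
algebra `M(3,ℂ)` for all sufficiently small `t ≠ 0`. -/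
theorem deformation_generates_full_matrix_algebra
    (α β b c : ℂ) (hβ : β ≠ 0) (hα0 : α ≠ 0) (hα1 : α ≠ 1) (hb : b ≠ 0)
    (A B : ℂ → Matrix (Fin 3) (Fin 3) ℂ)
    (hA : ∀ i j : Fin 3, AnalyticAt ℂ (fun t => A t i j) 0)
    (hB : ∀ i j : Fin 3, AnalyticAt ℂ (fun t => B t i j) 0)
    (hAform : ∀ t : ℂ, A t 0 1 = 0 ∧ A t 0 2 = 0 ∧ A t 1 0 = 0 ∧ A t 2 0 = 0)
    (hA0 : A 0 = β • !![α, 0, 0; 0, 1, 1; 0, 0, 1])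
    (hB0 : B 0 = β • !![α, b, c; 0, 1, 1; 0, 0, 1])
    (hB31 : deriv (fun t => B t 2 0) 0 ≠ 0) :
    ∃ ε > (0 : ℝ), ∀ t : ℂ, 0 < ‖t‖ → ‖t‖ < ε →
      Algebra.adjoin ℂ ({A t, B t} : Set (Matrix (Fin 3) (Fin 3) ℂ)) = ⊤ := by
  classical
  -- entry values at 0
  have a00v : A 0 0 0 = β * α := by rw [hA0]; simp [Matrix.vecHead, Matrix.vecTail]
  have a11v : A 0 1 1 = β := by rw [hA0]; simp [Matrix.vecHead, Matrix.vecTail]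
  have a12v : A 0 1 2 = β := by rw [hA0]; simp [Matrix.vecHead, Matrix.vecTail]
  have a21v : A 0 2 1 = 0 := by rw [hA0]; simp [Matrix.vecHead, Matrix.vecTail]
  have a22v : A 0 2 2 = β := by rw [hA0]; simp [Matrix.vecHead, Matrix.vecTail]
  have b01v : B 0 0 1 = β * b := by rw [hB0]; simp [Matrix.vecHead, Matrix.vecTail]
  have b02v : B 0 0 2 = β * c := by rw [hB0]; simp [Matrix.vecHead, Matrix.vecTail]
  have b10v : B 0 1 0 = 0 := by rw [hB0]; simp [Matrix.vecHead, Matrix.vecTail]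
  have b20v : B 0 2 0 = 0 := by rw [hB0]; simp [Matrix.vecHead, Matrix.vecTail]
  set p := deriv (fun t => B t 1 0) 0 with hpdef
  set s := deriv (fun t => B t 2 0) 0 with hsdef
  have hs : s ≠ 0 := hB31
  -- limits along the punctured filter
  have hq : Tendsto (fun t => B t 1 0 / t) (𝓝[≠] (0:ℂ)) (𝓝 p) := aux_slope (hB 1 0) b10v
  have hr : Tendsto (fun t => B t 2 0 / t) (𝓝[≠] (0:ℂ)) (𝓝 s) := aux_slope (hB 2 0) b20v
  have cA : ∀ (i j : Fin 3) {v : ℂ}, A 0 i j = v →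
      Tendsto (fun t => A t i j) (𝓝[≠] (0:ℂ)) (𝓝 v) := fun i j v hv =>
    hv ▸ ((hA i j).continuousAt.tendsto.mono_left nhdsWithin_le_nhds)
  have cB : ∀ (i j : Fin 3) {v : ℂ}, B 0 i j = v →
      Tendsto (fun t => B t i j) (𝓝[≠] (0:ℂ)) (𝓝 v) := fun i j v hv =>
    hv ▸ ((hB i j).continuousAt.tendsto.mono_left nhdsWithin_le_nhds)
  -- the scalar function f
  set f : ℂ → ℂ := fun t =>
    A t 0 0 * A t 0 0 - (A t 1 1 + A t 2 2) * A t 0 0 +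
      (A t 1 1 * A t 2 2 - A t 1 2 * A t 2 1) with hfdef
  have hfca : ContinuousAt f 0 := by
    apply ContinuousAt.add
    · exact ((hA 0 0).continuousAt.mul (hA 0 0).continuousAt).sub
        (((hA 1 1).continuousAt.add (hA 2 2).continuousAt).mul (hA 0 0).continuousAt)
    · exact ((hA 1 1).continuousAt.mul (hA 2 2).continuousAt).sub
        ((hA 1 2).continuousAt.mul (hA 2 1).continuousAt)
  have hf0 : f 0 = β ^ 2 * (α - 1) ^ 2 := by
    rw [hfdef]; simp only; rw [a00v, a11v, a12v, a21v, a22v]; ring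
  have evf : ∀ᶠ t in 𝓝[≠] (0:ℂ), f t ≠ 0 := by
    apply Eventually.filter_mono nhdsWithin_le_nhds
    apply hfca.eventually_ne
    rw [hf0]
    exact mul_ne_zero (pow_ne_zero _ hβ) (pow_ne_zero _ (sub_ne_zero.mpr hα1))
  -- the 4×4 corner system
  set Φ : ℂ → Matrix (Fin 4) (Fin 4) ℂ := fun t =>
    !![1, A t 1 1, (B t 1 0 / t) * B t 0 1, (A t 1 1 * (B t 1 0 / t) + A t 1 2 * (B t 2 0 / t)) * B t 0 1;
       0, A t 1 2, (B t 1 0 / t) * B t 0 2, (A t 1 1 * (B t 1 0 / t) + A t 1 2 * (B t 2 0 / t)) * B t 0 2;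
       0, A t 2 1, (B t 2 0 / t) * B t 0 1, (A t 2 1 * (B t 1 0 / t) + A t 2 2 * (B t 2 0 / t)) * B t 0 1;
       1, A t 2 2, (B t 2 0 / t) * B t 0 2, (A t 2 1 * (B t 1 0 / t) + A t 2 2 * (B t 2 0 / t)) * B t 0 2]
    with hΦdef
  set Λ4 : Matrix (Fin 4) (Fin 4) ℂ :=
    !![1, β, p * (β * b), (β * p + β * s) * (β * b);
       0, β, p * (β * c), (β * p + β * s) * (β * c);
       0, 0, s * (β * b), (0 * p + β * s) * (β * b);
       1, β, s * (β * c), (0 * p + β * s) * (β * c)] with hΛ4def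
  have hΦlim : Tendsto Φ (𝓝[≠] (0:ℂ)) (𝓝 Λ4) := by
    apply tendsto_pi_nhds.mpr
    intro i
    rw [tendsto_pi_nhds]
    intro j
    fin_cases i <;> fin_cases j <;>
      simp only [hΦdef, hΛ4def, Matrix.cons_val', Matrix.cons_val_zero, Matrix.cons_val_one,
        Matrix.head_cons, Matrix.head_fin_const, Matrix.empty_val', Matrix.cons_val_fin_one,
        Matrix.cons_val_two, Matrix.cons_val_three, Matrix.vecHead, Matrix.vecTail,
        Function.comp_apply]
    · exact tendsto_const_nhds
    · exact cA 1 1 a11v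
    · exact (hq.mul (cB 0 1 b01v))
    · exact (((cA 1 1 a11v).mul hq).add ((cA 1 2 a12v).mul hr)).mul (cB 0 1 b01v)
    · exact tendsto_const_nhds
    · exact cA 1 2 a12v
    · exact (hq.mul (cB 0 2 b02v))
    · exact (((cA 1 1 a11v).mul hq).add ((cA 1 2 a12v).mul hr)).mul (cB 0 2 b02v)
    · exact tendsto_const_nhds
    · exact cA 2 1 a21v
    · exact (hr.mul (cB 0 1 b01v))
    · exact (((cA 2 1 a21v).mul hq).add ((cA 2 2 a22v).mul hr)).mul (cB 0 1 b01v)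
    · exact tendsto_const_nhds
    · exact cA 2 2 a22v
    · exact (hr.mul (cB 0 2 b02v))
    · exact (((cA 2 1 a21v).mul hq).add ((cA 2 2 a22v).mul hr)).mul (cB 0 2 b02v)
  have hΛ4det : Λ4.det = -(β ^ 4 * s ^ 2 * b ^ 2) := by
    rw [hΛ4def, Matrix.det_succ_row_zero]
    simp [Fin.sum_univ_succ, Matrix.det_fin_three, Matrix.submatrix_apply,
      show (Fin.succAbove 1 2 : Fin 4) = 3 from rfl, show (Fin.succAbove 2 2 : Fin 4) = 3 from rfl,
      show (Fin.succAbove 3 2 : Fin 4) = 2 from rfl]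
    ring
  have evΦ : ∀ᶠ t in 𝓝[≠] (0:ℂ), (Φ t).det ≠ 0 := by
    have hcd : Tendsto (fun t => (Φ t).det) (𝓝[≠] (0:ℂ)) (𝓝 Λ4.det) :=
      (continuous_id.matrix_det.continuousAt.tendsto).comp hΦlim
    apply hcd.eventually_ne
    rw [hΛ4det]
    simp only [ne_eq, neg_eq_zero]
    exact mul_ne_zero (mul_ne_zero (pow_ne_zero _ hβ) (pow_ne_zero _ hs)) (pow_ne_zero _ hb)
  -- the 2×2 first-column system
  set Ψ : ℂ → Matrix (Fin 2) (Fin 2) ℂ := fun t =>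
    !![B t 1 0 / t, A t 1 1 * (B t 1 0 / t) + A t 1 2 * (B t 2 0 / t);
       B t 2 0 / t, A t 2 1 * (B t 1 0 / t) + A t 2 2 * (B t 2 0 / t)] with hΨdef
  set Λ2 : Matrix (Fin 2) (Fin 2) ℂ :=
    !![p, β * p + β * s; s, 0 * p + β * s] with hΛ2def
  have hΨlim : Tendsto Ψ (𝓝[≠] (0:ℂ)) (𝓝 Λ2) := by
    apply tendsto_pi_nhds.mpr
    intro i
    rw [tendsto_pi_nhds]
    intro j
    fin_cases i <;> fin_cases j <;>
      simp only [hΨdef, hΛ2def, Matrix.cons_val', Matrix.cons_val_zero, Matrix.cons_val_one,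
        Matrix.head_cons, Matrix.head_fin_const, Matrix.empty_val', Matrix.cons_val_fin_one]
    · exact hq
    · exact ((cA 1 1 a11v).mul hq).add ((cA 1 2 a12v).mul hr)
    · exact hr
    · exact ((cA 2 1 a21v).mul hq).add ((cA 2 2 a22v).mul hr)
  have hΛ2det : Λ2.det = -(β * s ^ 2) := by
    rw [hΛ2def, Matrix.det_fin_two_of]; ring
  have evΨ : ∀ᶠ t in 𝓝[≠] (0:ℂ), (Ψ t).det ≠ 0 := by
    have hcd : Tendsto (fun t => (Ψ t).det) (𝓝[≠] (0:ℂ)) (𝓝 Λ2.det) :=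
      (continuous_id.matrix_det.continuousAt.tendsto).comp hΨlim
    apply hcd.eventually_ne
    rw [hΛ2det]
    simp only [ne_eq, neg_eq_zero]
    exact mul_ne_zero hβ (pow_ne_zero _ hs)
  -- the 2×2 first-row system
  set ME : ℂ → Matrix (Fin 2) (Fin 2) ℂ := fun t =>
    !![B t 0 1, B t 0 1 * A t 1 1 + B t 0 2 * A t 2 1;
       B t 0 2, B t 0 1 * A t 1 2 + B t 0 2 * A t 2 2] with hMEdef
  set ΛE : Matrix (Fin 2) (Fin 2) ℂ :=
    !![β * b, β * b * β + β * c * 0; β * c, β * b * β + β * c * β] with hΛEdef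
  have hMElim : Tendsto ME (𝓝[≠] (0:ℂ)) (𝓝 ΛE) := by
    apply tendsto_pi_nhds.mpr
    intro i
    rw [tendsto_pi_nhds]
    intro j
    fin_cases i <;> fin_cases j <;>
      simp only [hMEdef, hΛEdef, Matrix.cons_val', Matrix.cons_val_zero, Matrix.cons_val_one,
        Matrix.head_cons, Matrix.head_fin_const, Matrix.empty_val', Matrix.cons_val_fin_one]
    · exact cB 0 1 b01v
    · exact ((cB 0 1 b01v).mul (cA 1 1 a11v)).add ((cB 0 2 b02v).mul (cA 2 1 a21v))
    · exact cB 0 2 b02v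
    · exact ((cB 0 1 b01v).mul (cA 1 2 a12v)).add ((cB 0 2 b02v).mul (cA 2 2 a22v))
  have hΛEdet : ΛE.det = β ^ 3 * b ^ 2 := by
    rw [hΛEdef, Matrix.det_fin_two_of]; ring
  have evME : ∀ᶠ t in 𝓝[≠] (0:ℂ), (ME t).det ≠ 0 := by
    have hcd : Tendsto (fun t => (ME t).det) (𝓝[≠] (0:ℂ)) (𝓝 ΛE.det) :=
      (continuous_id.matrix_det.continuousAt.tendsto).comp hMElim
    apply hcd.eventually_ne
    rw [hΛEdet]
    exact mul_ne_zero (pow_ne_zero _ hβ) (pow_ne_zero _ hb)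
  -- main eventual statement
  have main : ∀ᶠ t in 𝓝[≠] (0:ℂ),
      Algebra.adjoin ℂ ({A t, B t} : Set (Matrix (Fin 3) (Fin 3) ℂ)) = ⊤ := by
    filter_upwards [evf, evΦ, evΨ, evME, self_mem_nhdsWithin] with t hft hΦt hΨt hMEt ht'
    have ht : t ≠ 0 := ht'
    obtain ⟨h01, h02, h10, h20⟩ := hAform t
    set EE : Matrix (Fin 3) (Fin 3) ℂ := !![1,0,0;0,0,0;0,0,0] with hEE
    have hPm : f t • EE = A t * A t - (A t 1 1 + A t 2 2) • A t +
        (A t 1 1 * A t 2 2 - A t 1 2 * A t 2 1) • (1 : Matrix (Fin 3) (Fin 3) ℂ) := by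
      ext i j
      fin_cases i <;> fin_cases j <;>
        simp [hEE, Matrix.mul_apply, Fin.sum_univ_three, Matrix.one_apply, h01, h02, h10, h20,
          Matrix.vecHead, Matrix.vecTail, hfdef] <;> ring
    set m : Fin 9 → Matrix (Fin 3) (Fin 3) ℂ :=
      ![f t • EE, (f t • EE) * B t, (f t • EE) * B t * A t, B t * (f t • EE),
        A t * (B t * (f t • EE)), 1, A t, B t * (f t • EE) * B t,
        A t * (B t * (f t • EE) * B t)] with hm
    apply aux_span_top _ m
    · have hAmem : A t ∈ Algebra.adjoin ℂ ({A t, B t} : Set (Matrix (Fin 3) (Fin 3) ℂ)) :=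
        Algebra.subset_adjoin (Set.mem_insert _ _)
      have hBmem : B t ∈ Algebra.adjoin ℂ ({A t, B t} : Set (Matrix (Fin 3) (Fin 3) ℂ)) :=
        Algebra.subset_adjoin (Set.mem_insert_of_mem _ rfl)
      have hPmem : f t • EE ∈ Algebra.adjoin ℂ ({A t, B t} : Set (Matrix (Fin 3) (Fin 3) ℂ)) := by
        rw [hPm]
        exact add_mem (sub_mem (mul_mem hAmem hAmem) (Subalgebra.smul_mem _ hAmem _))
          (Subalgebra.smul_mem _ (one_mem _) _)
      intro k
      fin_cases k <;>
        first
          | exact hPmem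
          | exact mul_mem hPmem hBmem
          | exact mul_mem (mul_mem hPmem hBmem) hAmem
          | exact mul_mem hBmem hPmem
          | exact mul_mem hAmem (mul_mem hBmem hPmem)
          | exact one_mem _
          | exact hAmem
          | exact mul_mem (mul_mem hBmem hPmem) hBmem
          | exact mul_mem hAmem (mul_mem (mul_mem hBmem hPmem) hBmem)
    · rw [Fintype.linearIndependent_iff]
      intro g hg
      rw [aux_sum_nine] at hg
      have hg' : g 0 • (f t • EE) + g 1 • ((f t • EE) * B t) + g 2 • ((f t • EE) * B t * A t) +
            g 3 • (B t * (f t • EE)) + g 4 • (A t * (B t * (f t • EE))) +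
            g 5 • (1 : Matrix (Fin 3) (Fin 3) ℂ) + g 6 • A t +
            g 7 • (B t * (f t • EE) * B t) + g 8 • (A t * (B t * (f t • EE) * B t)) = 0 := hg
      have key : ∀ i j : Fin 3,
          (g 0 • (f t • EE) + g 1 • ((f t • EE) * B t) + g 2 • ((f t • EE) * B t * A t) +
            g 3 • (B t * (f t • EE)) + g 4 • (A t * (B t * (f t • EE))) +
            g 5 • (1 : Matrix (Fin 3) (Fin 3) ℂ) + g 6 • A t +
            g 7 • (B t * (f t • EE) * B t) + g 8 • (A t * (B t * (f t • EE) * B t))) i j = 0 :=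
        fun i j => (congrFun (congrFun hg' i) j).trans rfl
      have eEE : ∀ i j : Fin 3, EE i j = !![(1:ℂ),0,0;0,0,0;0,0,0] i j := fun i j => by rw [hEE]
      have EE00 : EE 0 0 = 1 := by rw [hEE]; simp [Matrix.vecHead, Matrix.vecTail]
      have EE01 : EE 0 1 = 0 := by rw [hEE]; simp [Matrix.vecHead, Matrix.vecTail]
      have EE02 : EE 0 2 = 0 := by rw [hEE]; simp [Matrix.vecHead, Matrix.vecTail]
      have EE10 : EE 1 0 = 0 := by rw [hEE]; simp [Matrix.vecHead, Matrix.vecTail]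
      have EE11 : EE 1 1 = 0 := by rw [hEE]; simp [Matrix.vecHead, Matrix.vecTail]
      have EE12 : EE 1 2 = 0 := by rw [hEE]; simp [Matrix.vecHead, Matrix.vecTail]
      have EE20 : EE 2 0 = 0 := by rw [hEE]; simp [Matrix.vecHead, Matrix.vecTail]
      have EE21 : EE 2 1 = 0 := by rw [hEE]; simp [Matrix.vecHead, Matrix.vecTail]
      have EE22 : EE 2 2 = 0 := by rw [hEE]; simp [Matrix.vecHead, Matrix.vecTail]
      clear hEE hg hg'
      have e11 : g 5 + g 6 * A t 1 1 + g 7 * (f t * (B t 1 0 * B t 0 1)) +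
          g 8 * (f t * ((A t 1 1 * B t 1 0 + A t 1 2 * B t 2 0) * B t 0 1)) = 0 := by
        have h := key 1 1
        simp only [Matrix.add_apply, Matrix.smul_apply, Matrix.mul_apply, Fin.sum_univ_three,
          Matrix.one_apply, smul_eq_mul] at h
        simp only [EE00, EE01, EE02, EE10, EE11, EE12, EE20, EE21, EE22,
          h01, h02, h10, h20] at h
        norm_num [Fin.ext_iff] at h
        linear_combination h
      have e12 : g 6 * A t 1 2 + g 7 * (f t * (B t 1 0 * B t 0 2)) +
          g 8 * (f t * ((A t 1 1 * B t 1 0 + A t 1 2 * B t 2 0) * B t 0 2)) = 0 := by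
        have h := key 1 2
        simp only [Matrix.add_apply, Matrix.smul_apply, Matrix.mul_apply, Fin.sum_univ_three,
          Matrix.one_apply, smul_eq_mul] at h
        simp only [EE00, EE01, EE02, EE10, EE11, EE12, EE20, EE21, EE22,
          h01, h02, h10, h20] at h
        norm_num [Fin.ext_iff] at h
        linear_combination h
      have e21 : g 6 * A t 2 1 + g 7 * (f t * (B t 2 0 * B t 0 1)) +
          g 8 * (f t * ((A t 2 1 * B t 1 0 + A t 2 2 * B t 2 0) * B t 0 1)) = 0 := by
        have h := key 2 1
        simp only [Matrix.add_apply, Matrix.smul_apply, Matrix.mul_apply, Fin.sum_univ_three,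
          Matrix.one_apply, smul_eq_mul] at h
        simp only [EE00, EE01, EE02, EE10, EE11, EE12, EE20, EE21, EE22,
          h01, h02, h10, h20] at h
        norm_num [Fin.ext_iff] at h
        linear_combination h
      have e22 : g 5 + g 6 * A t 2 2 + g 7 * (f t * (B t 2 0 * B t 0 2)) +
          g 8 * (f t * ((A t 2 1 * B t 1 0 + A t 2 2 * B t 2 0) * B t 0 2)) = 0 := by
        have h := key 2 2
        simp only [Matrix.add_apply, Matrix.smul_apply, Matrix.mul_apply, Fin.sum_univ_three,
          Matrix.one_apply, smul_eq_mul] at h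
        simp only [EE00, EE01, EE02, EE10, EE11, EE12, EE20, EE21, EE22,
          h01, h02, h10, h20] at h
        norm_num [Fin.ext_iff] at h
        linear_combination h
      -- solve the corner system
      set M4 : Matrix (Fin 4) (Fin 4) ℂ :=
        !![1, A t 1 1, f t * (B t 1 0 * B t 0 1), f t * ((A t 1 1 * B t 1 0 + A t 1 2 * B t 2 0) * B t 0 1);
           0, A t 1 2, f t * (B t 1 0 * B t 0 2), f t * ((A t 1 1 * B t 1 0 + A t 1 2 * B t 2 0) * B t 0 2);
           0, A t 2 1, f t * (B t 2 0 * B t 0 1), f t * ((A t 2 1 * B t 1 0 + A t 2 2 * B t 2 0) * B t 0 1);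
           1, A t 2 2, f t * (B t 2 0 * B t 0 2), f t * ((A t 2 1 * B t 1 0 + A t 2 2 * B t 2 0) * B t 0 2)]
        with hM4
      have hM4eq : M4 = Φ t * Matrix.diagonal ![1, 1, f t * t, f t * t] := by
        ext i j
        fin_cases i <;> fin_cases j <;>
          simp [hM4, hΦdef, Matrix.mul_diagonal, Matrix.vecHead, Matrix.vecTail] <;>
          field_simp <;> ring
      have hM4det : M4.det ≠ 0 := by
        rw [hM4eq, Matrix.det_mul, Matrix.det_diagonal]
        refine mul_ne_zero hΦt ?_
        simp [Fin.prod_univ_four, Matrix.vecHead, Matrix.vecTail, hft, ht]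
      have hz4 : (![g 5, g 6, g 7, g 8] : Fin 4 → ℂ) = 0 := by
        apply Matrix.eq_zero_of_mulVec_eq_zero hM4det
        funext i
        fin_cases i <;>
          simp [hM4, Matrix.mulVec, dotProduct, Fin.sum_univ_four,
            Matrix.vecHead, Matrix.vecTail]
        · linear_combination e11
        · linear_combination e12
        · linear_combination e21
        · linear_combination e22
      have hg5 : g 5 = 0 := congrFun hz4 0
      have hg6 : g 6 = 0 := congrFun hz4 1
      have hg7 : g 7 = 0 := congrFun hz4 2
      have hg8 : g 8 = 0 := congrFun hz4 3
      -- first-column system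
      have e10 : g 3 * (f t * B t 1 0) + g 4 * (f t * (A t 1 1 * B t 1 0 + A t 1 2 * B t 2 0)) +
          g 7 * (f t * (B t 1 0 * B t 0 0)) +
          g 8 * (f t * ((A t 1 1 * B t 1 0 + A t 1 2 * B t 2 0) * B t 0 0)) = 0 := by
        have h := key 1 0
        simp only [Matrix.add_apply, Matrix.smul_apply, Matrix.mul_apply, Fin.sum_univ_three,
          Matrix.one_apply, smul_eq_mul] at h
        simp only [EE00, EE01, EE02, EE10, EE11, EE12, EE20, EE21, EE22,
          h01, h02, h10, h20] at h
        norm_num [Fin.ext_iff] at h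
        linear_combination h
      have e20 : g 3 * (f t * B t 2 0) + g 4 * (f t * (A t 2 1 * B t 1 0 + A t 2 2 * B t 2 0)) +
          g 7 * (f t * (B t 2 0 * B t 0 0)) +
          g 8 * (f t * ((A t 2 1 * B t 1 0 + A t 2 2 * B t 2 0) * B t 0 0)) = 0 := by
        have h := key 2 0
        simp only [Matrix.add_apply, Matrix.smul_apply, Matrix.mul_apply, Fin.sum_univ_three,
          Matrix.one_apply, smul_eq_mul] at h
        simp only [EE00, EE01, EE02, EE10, EE11, EE12, EE20, EE21, EE22,
          h01, h02, h10, h20] at h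
        norm_num [Fin.ext_iff] at h
        linear_combination h
      set M2 : Matrix (Fin 2) (Fin 2) ℂ :=
        !![f t * B t 1 0, f t * (A t 1 1 * B t 1 0 + A t 1 2 * B t 2 0);
           f t * B t 2 0, f t * (A t 2 1 * B t 1 0 + A t 2 2 * B t 2 0)] with hM2
      have hM2eq : M2 = Ψ t * Matrix.diagonal ![f t * t, f t * t] := by
        ext i j
        fin_cases i <;> fin_cases j <;>
          simp [hM2, hΨdef, Matrix.mul_diagonal, Matrix.vecHead, Matrix.vecTail] <;>
          field_simp <;> ring
      have hM2det : M2.det ≠ 0 := by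
        rw [hM2eq, Matrix.det_mul, Matrix.det_diagonal]
        refine mul_ne_zero hΨt ?_
        simp [Fin.prod_univ_two, Matrix.vecHead, Matrix.vecTail, hft, ht]
      have hz2 : (![g 3, g 4] : Fin 2 → ℂ) = 0 := by
        apply Matrix.eq_zero_of_mulVec_eq_zero hM2det
        funext i
        fin_cases i <;>
          simp [hM2, Matrix.mulVec, dotProduct, Fin.sum_univ_two,
            Matrix.vecHead, Matrix.vecTail]
        · linear_combination e10 - (f t * (B t 1 0 * B t 0 0)) * hg7 -
            (f t * ((A t 1 1 * B t 1 0 + A t 1 2 * B t 2 0) * B t 0 0)) * hg8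
        · linear_combination e20 - (f t * (B t 2 0 * B t 0 0)) * hg7 -
            (f t * ((A t 2 1 * B t 1 0 + A t 2 2 * B t 2 0) * B t 0 0)) * hg8
      have hg3 : g 3 = 0 := congrFun hz2 0
      have hg4 : g 4 = 0 := congrFun hz2 1
      -- first-row system
      have e01 : g 1 * (f t * B t 0 1) + g 2 * (f t * (B t 0 1 * A t 1 1 + B t 0 2 * A t 2 1)) +
          g 7 * (f t * (B t 0 0 * B t 0 1)) +
          g 8 * (f t * (A t 0 0 * (B t 0 0 * B t 0 1))) = 0 := by
        have h := key 0 1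
        simp only [Matrix.add_apply, Matrix.smul_apply, Matrix.mul_apply, Fin.sum_univ_three,
          Matrix.one_apply, smul_eq_mul] at h
        simp only [EE00, EE01, EE02, EE10, EE11, EE12, EE20, EE21, EE22,
          h01, h02, h10, h20] at h
        norm_num [Fin.ext_iff] at h
        linear_combination h
      have e02 : g 1 * (f t * B t 0 2) + g 2 * (f t * (B t 0 1 * A t 1 2 + B t 0 2 * A t 2 2)) +
          g 7 * (f t * (B t 0 0 * B t 0 2)) +
          g 8 * (f t * (A t 0 0 * (B t 0 0 * B t 0 2))) = 0 := by
        have h := key 0 2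
        simp only [Matrix.add_apply, Matrix.smul_apply, Matrix.mul_apply, Fin.sum_univ_three,
          Matrix.one_apply, smul_eq_mul] at h
        simp only [EE00, EE01, EE02, EE10, EE11, EE12, EE20, EE21, EE22,
          h01, h02, h10, h20] at h
        norm_num [Fin.ext_iff] at h
        linear_combination h
      set MR : Matrix (Fin 2) (Fin 2) ℂ :=
        !![f t * B t 0 1, f t * (B t 0 1 * A t 1 1 + B t 0 2 * A t 2 1);
           f t * B t 0 2, f t * (B t 0 1 * A t 1 2 + B t 0 2 * A t 2 2)] with hMR
      have hMReq : MR = ME t * Matrix.diagonal ![f t, f t] := by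
        ext i j
        fin_cases i <;> fin_cases j <;>
          simp [hMR, hMEdef, Matrix.mul_diagonal, Matrix.vecHead, Matrix.vecTail] <;> ring
      have hMRdet : MR.det ≠ 0 := by
        rw [hMReq, Matrix.det_mul, Matrix.det_diagonal]
        refine mul_ne_zero hMEt ?_
        simp [Fin.prod_univ_two, Matrix.vecHead, Matrix.vecTail, hft]
      have hzR : (![g 1, g 2] : Fin 2 → ℂ) = 0 := by
        apply Matrix.eq_zero_of_mulVec_eq_zero hMRdet
        funext i
        fin_cases i <;>
          simp [hMR, Matrix.mulVec, dotProduct, Fin.sum_univ_two,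
            Matrix.vecHead, Matrix.vecTail]
        · linear_combination e01 - (f t * (B t 0 0 * B t 0 1)) * hg7 -
            (f t * (A t 0 0 * (B t 0 0 * B t 0 1))) * hg8
        · linear_combination e02 - (f t * (B t 0 0 * B t 0 2)) * hg7 -
            (f t * (A t 0 0 * (B t 0 0 * B t 0 2))) * hg8
      have hg1 : g 1 = 0 := congrFun hzR 0
      have hg2 : g 2 = 0 := congrFun hzR 1
      -- the (0,0) entry
      have e00 : g 0 * f t + g 1 * (f t * B t 0 0) + g 2 * (f t * (B t 0 0 * A t 0 0)) +
          g 3 * (f t * B t 0 0) + g 4 * (f t * (A t 0 0 * B t 0 0)) + g 5 + g 6 * A t 0 0 +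
          g 7 * (f t * (B t 0 0 * B t 0 0)) +
          g 8 * (f t * (A t 0 0 * (B t 0 0 * B t 0 0))) = 0 := by
        have h := key 0 0
        simp only [Matrix.add_apply, Matrix.smul_apply, Matrix.mul_apply, Fin.sum_univ_three,
          Matrix.one_apply, smul_eq_mul] at h
        simp only [EE00, EE01, EE02, EE10, EE11, EE12, EE20, EE21, EE22,
          h01, h02, h10, h20] at h
        norm_num [Fin.ext_iff] at h
        linear_combination h
      have hg0 : g 0 = 0 := by
        have h0f : g 0 * f t = 0 := by
          linear_combination e00 - (f t * B t 0 0) * hg1 - (f t * (B t 0 0 * A t 0 0)) * hg2 -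
            (f t * B t 0 0) * hg3 - (f t * (A t 0 0 * B t 0 0)) * hg4 - hg5 - A t 0 0 * hg6 -
            (f t * (B t 0 0 * B t 0 0)) * hg7 - (f t * (A t 0 0 * (B t 0 0 * B t 0 0))) * hg8
        exact (mul_eq_zero.mp h0f).resolve_right hft
      intro i
      fin_cases i <;>
        first
          | exact hg0 | exact hg1 | exact hg2 | exact hg3 | exact hg4
          | exact hg5 | exact hg6 | exact hg7 | exact hg8
  exact aux_eps main
end

section
/- Let n ≥ 1 and let 𝒜 be a unital ℂ-subalgebra of the matrix algebra M(n,ℂ). Suppose there are vectors v, w ∈ ℂⁿ such that the rank-one matrix v·wᵀ (with (i,j) entry vᵢwⱼ) belongs to 𝒜, the set {M·v : M ∈ 𝒜} spans ℂⁿ, and the set {wᵀ·M : M ∈ 𝒜} spans the space of row vectors ℂⁿ. Then 𝒜 = M(n,ℂ). -/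
lemma vecMulVec_mulVec_vecMul (n : ℕ) (M N : Matrix (Fin n) (Fin n) ℂ)
    (v w : Fin n → ℂ) :
    Matrix.vecMulVec (Matrix.mulVec M v) (Matrix.vecMul w N)
      = M * Matrix.vecMulVec v w * N := by
  ext i j
  simp only [Matrix.vecMulVec_apply, Matrix.mulVec, Matrix.vecMul, Matrix.mul_apply,
    dotProduct, Finset.sum_mul, Finset.mul_sum]
  exact Finset.sum_congr rfl fun k _ => Finset.sum_congr rfl fun l _ => by ring

/-- Burnside-type criterion used in the paper: if a unital subalgebra `𝒜 ⊆ M(n,ℂ)` contains a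
rank-one matrix `v·wᵀ`, and `𝒜·v` spans `ℂⁿ` while `wᵀ·𝒜` spans the row vectors, then
`𝒜 = M(n,ℂ)`. -/
theorem subalgebra_eq_top_of_rank_one
    (n : ℕ) (hn : 1 ≤ n) (𝒜 : Subalgebra ℂ (Matrix (Fin n) (Fin n) ℂ))
    (v w : Fin n → ℂ)
    (hvw : Matrix.vecMulVec v w ∈ 𝒜)
    (hcol : Submodule.span ℂ {x : Fin n → ℂ | ∃ M ∈ 𝒜, Matrix.mulVec M v = x} = ⊤)
    (hrow : Submodule.span ℂ {x : Fin n → ℂ | ∃ M ∈ 𝒜, Matrix.vecMul w M = x} = ⊤) :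
    𝒜 = ⊤ := by
  have key : ∀ a b : Fin n → ℂ, Matrix.vecMulVec a b ∈ 𝒜 := by
    intro a b
    have ha : a ∈ Submodule.span ℂ {x : Fin n → ℂ | ∃ M ∈ 𝒜, Matrix.mulVec M v = x} := by
      rw [hcol]; trivial
    have hb : b ∈ Submodule.span ℂ {x : Fin n → ℂ | ∃ M ∈ 𝒜, Matrix.vecMul w M = x} := by
      rw [hrow]; trivial
    induction ha using Submodule.span_induction with
    | mem a hma =>
      obtain ⟨M, hM, rfl⟩ := hma
      induction hb using Submodule.span_induction with
      | mem b hmb =>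
        obtain ⟨N, hN, rfl⟩ := hmb
        rw [vecMulVec_mulVec_vecMul]
        exact 𝒜.mul_mem (𝒜.mul_mem hM hvw) hN
      | zero =>
        have : Matrix.vecMulVec (Matrix.mulVec M v) (0 : Fin n → ℂ) = 0 := by
          ext i j; simp [Matrix.vecMulVec_apply]
        rw [this]; exact 𝒜.zero_mem
      | add x y _ _ hx hy =>
        have : Matrix.vecMulVec (Matrix.mulVec M v) (x + y)
            = Matrix.vecMulVec (Matrix.mulVec M v) x + Matrix.vecMulVec (Matrix.mulVec M v) y := by
          ext i j; simp [Matrix.vecMulVec_apply, mul_add]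
        rw [this]; exact 𝒜.add_mem hx hy
      | smul c x _ hx =>
        have : Matrix.vecMulVec (Matrix.mulVec M v) (c • x)
            = c • Matrix.vecMulVec (Matrix.mulVec M v) x := by
          ext i j; simp [Matrix.vecMulVec_apply]; ring
        rw [this]; exact 𝒜.smul_mem hx c
    | zero =>
      have : Matrix.vecMulVec (0 : Fin n → ℂ) b = 0 := by
        ext i j; simp [Matrix.vecMulVec_apply]
      rw [this]; exact 𝒜.zero_mem
    | add x y _ _ hx hy =>
      have : Matrix.vecMulVec (x + y) b = Matrix.vecMulVec x b + Matrix.vecMulVec y b := by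
        ext i j; simp [Matrix.vecMulVec_apply, add_mul]
      rw [this]; exact 𝒜.add_mem hx hy
    | smul c x _ hx =>
      have : Matrix.vecMulVec (c • x) b = c • Matrix.vecMulVec x b := by
        ext i j; simp [Matrix.vecMulVec_apply]; ring
      rw [this]; exact 𝒜.smul_mem hx c
  rw [eq_top_iff]
  intro M _
  rw [Matrix.matrix_eq_sum_single M]
  apply Subalgebra.sum_mem
  intro i _
  apply Subalgebra.sum_mem
  intro j _
  have : Matrix.single i j (M i j)
      = Matrix.vecMulVec (Pi.single i (M i j)) (Pi.single j 1) := by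
    ext k l
    simp [Matrix.single, Matrix.vecMulVec_apply, Pi.single_apply]
    aesop
  rw [this]; exact key _ _
end

section
/- Let π be a group, α : π → ℂ* a group homomorphism such that α(γ₀) ≠ 1 for some γ₀ ∈ π, z : π → ℂ a map satisfying z(γ₁γ₂) = z(γ₁) + α(γ₁)z(γ₂) for all γ₁, γ₂ ∈ π which is not a coboundary (there is no c ∈ ℂ with z(γ) = c·(α(γ) − 1) for all γ), h : π → (ℂ,+) a nonzero group homomorphism, and g : π → ℂ any map. Define ρ₀(γ) to be the 3×3 complex matrix with rows (α(γ), z(γ), g(γ)), (0, 1, h(γ)), (0, 0, 1), and assume ρ₀ is a group homomorphism into GL(3,ℂ). Then the only 3×3 complex matrix A with trace 0 satisfying ρ₀(γ)·A = A·ρ₀(γ) for all γ ∈ π is A = 0. -/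
/-- `H⁰(π, sl(3,ℂ)) = 0` for the reducible metabelian representation `ρ₀`: the only traceless
matrix commuting with every `ρ₀(γ)` is `0`. -/
theorem centralizer_traceless_eq_zero (π : Type) [Group π] (α : π →* ℂˣ)
    (γ₀ : π) (hα : (α γ₀ : ℂ) ≠ 1)
    (z : π → ℂ) (hz : ∀ γ₁ γ₂ : π, z (γ₁ * γ₂) = z γ₁ + (α γ₁ : ℂ) * z γ₂)
    (hznc : ¬ ∃ c : ℂ, ∀ γ : π, z γ = c * ((α γ : ℂ) - 1))
    (h : π → ℂ) (hh : ∀ γ₁ γ₂ : π, h (γ₁ * γ₂) = h γ₁ + h γ₂)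
    (hhne : h ≠ 0)
    (g : π → ℂ)
    (ρ₀ : π → Matrix (Fin 3) (Fin 3) ℂ)
    (hρ₀ : ∀ γ : π, ρ₀ γ = !![(α γ : ℂ), z γ, g γ; 0, 1, h γ; 0, 0, 1])
    (hhom : ∀ γ₁ γ₂ : π, ρ₀ (γ₁ * γ₂) = ρ₀ γ₁ * ρ₀ γ₂) :
    ∀ A : Matrix (Fin 3) (Fin 3) ℂ,
      A.trace = 0 → (∀ γ : π, ρ₀ γ * A = A * ρ₀ γ) → A = 0 := by
  intro A htr hA
  obtain ⟨γ₁, hγ₁⟩ : ∃ γ, h γ ≠ 0 := by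
    by_contra hc
    push_neg at hc
    exact hhne (funext fun γ => hc γ)
  have E : ∀ γ (i j : Fin 3), (ρ₀ γ * A) i j = (A * ρ₀ γ) i j := fun γ i j => by
    rw [hA γ]
  have hsub : (α γ₀ : ℂ) - 1 ≠ 0 := sub_ne_zero.mpr hα
  have hp : A 2 0 = 0 := by
    have t := E γ₀ 2 0
    simp [hρ₀, Matrix.mul_apply, Fin.sum_univ_three, Matrix.vecHead, Matrix.vecTail] at t
    have : A 2 0 * ((α γ₀ : ℂ) - 1) = 0 := by linear_combination -t
    exact (mul_eq_zero.mp this).resolve_right hsub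
  have hq : A 2 1 = 0 := by
    have t := E γ₁ 2 2
    simp [hρ₀, Matrix.mul_apply, Fin.sum_univ_three, Matrix.vecHead, Matrix.vecTail, hp] at t
    rcases t with t | t
    · exact t
    · exact absurd t hγ₁
  have hd : A 1 0 = 0 := by
    have t := E γ₀ 1 0
    simp [hρ₀, Matrix.mul_apply, Fin.sum_univ_three, Matrix.vecHead, Matrix.vecTail, hp] at t
    have : A 1 0 * ((α γ₀ : ℂ) - 1) = 0 := by linear_combination -t
    exact (mul_eq_zero.mp this).resolve_right hsub
  have h01 : ∀ γ : π, A 0 1 * ((α γ : ℂ) - 1) = z γ * (A 0 0 - A 1 1) := by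
    intro γ
    have t := E γ 0 1
    simp [hρ₀, Matrix.mul_apply, Fin.sum_univ_three, Matrix.vecHead, Matrix.vecTail, hq] at t
    linear_combination t
  have hae : A 0 0 = A 1 1 := by
    by_contra hne
    apply hznc
    refine ⟨A 0 1 / (A 0 0 - A 1 1), fun γ => ?_⟩
    have hne' : A 0 0 - A 1 1 ≠ 0 := sub_ne_zero.mpr hne
    field_simp
    linear_combination -h01 γ
  have hb : A 0 1 = 0 := by
    have := h01 γ₀
    rw [hae, sub_self, mul_zero] at this
    exact (mul_eq_zero.mp this).resolve_right hsub
  have her : A 2 2 = A 1 1 := by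
    have t := E γ₁ 1 2
    simp [hρ₀, Matrix.mul_apply, Fin.sum_univ_three, Matrix.vecHead, Matrix.vecTail, hd] at t
    have h2 : (A 2 2 - A 1 1) * h γ₁ = 0 := by linear_combination t
    have := (mul_eq_zero.mp h2).resolve_right hγ₁
    linear_combination this
  have htr' : A 0 0 + A 1 1 + A 2 2 = 0 := by
    simpa [Matrix.trace, Matrix.diag, Fin.sum_univ_three] using htr
  have h11 : A 1 1 = 0 := by
    rw [hae, her] at htr'
    linear_combination htr' / 3
  have h00 : A 0 0 = 0 := hae.trans h11
  have h22 : A 2 2 = 0 := her.trans h11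
  have h02 : ∀ γ : π, A 0 2 * ((α γ : ℂ) - 1) + z γ * A 1 2 = 0 := by
    intro γ
    have t := E γ 0 2
    simp [hρ₀, Matrix.mul_apply, Fin.sum_univ_three, Matrix.vecHead, Matrix.vecTail,
      hb, h00, h22] at t
    linear_combination t
  have hf : A 1 2 = 0 := by
    by_contra hne
    apply hznc
    refine ⟨-A 0 2 / A 1 2, fun γ => ?_⟩
    field_simp
    linear_combination h02 γ
  have hc : A 0 2 = 0 := by
    have := h02 γ₀
    rw [hf, mul_zero, add_zero] at this
    exact (mul_eq_zero.mp this).resolve_right hsub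
  ext i j
  fin_cases i <;> fin_cases j <;>
    simp [h00, hb, hc, hd, h11, hf, hp, hq, h22]
end

section
/- Let n ≥ 1 and A ∈ M(n,ℂ). If the centralizer {X ∈ M(n,ℂ) : A·X = X·A} of A in the matrix algebra has dimension n as a complex vector space, then it equals ℂ[A], the unital ℂ-subalgebra of M(n,ℂ) generated by A. -/
open Polynomial Module

namespace CentAux

noncomputable section

variable {n : ℕ} (A : Matrix (Fin n) (Fin n) ℂ)

noncomputable def toEnd (B : Matrix (Fin n) (Fin n) ℂ) (hB : A * B = B * A) :
    Module.End (Polynomial ℂ) (Module.AEval' (Matrix.toLin' A)) :=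
  LinearMap.ofAEval (Matrix.toLin' A)
    ((Module.AEval'.of (Matrix.toLin' A)).toLinearMap ∘ₗ Matrix.toLin' B)
    (fun m => by
      simp only [LinearMap.comp_apply, LinearEquiv.coe_toLinearMap, Module.End.smul_def]
      rw [Module.AEval'.X_smul_of]
      refine congrArg _ ?_
      simp only [Matrix.toLin'_apply, Matrix.mulVec_mulVec, hB])

lemma toEnd_apply_of (B : Matrix (Fin n) (Fin n) ℂ) (hB : A * B = B * A) (m : Fin n → ℂ) :
    toEnd A B hB (Module.AEval'.of (Matrix.toLin' A) m)
      = Module.AEval'.of (Matrix.toLin' A) (B.mulVec m) := by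
  show Matrix.toLin' B m = B.mulVec m
  exact Matrix.toLin'_apply B m

noncomputable def centToEnd :
    (Subalgebra.centralizer ℂ ({A} : Set (Matrix (Fin n) (Fin n) ℂ))) →ₗ[ℂ]
      Module.End (Polynomial ℂ) (Module.AEval' (Matrix.toLin' A)) where
  toFun B := toEnd A B.1 (B.2 A rfl)
  map_add' B C := by
    refine LinearMap.ext fun m => ?_
    show Module.AEval'.of (Matrix.toLin' A) ((Matrix.toLin' (B.1 + C.1))
      ((Module.AEval'.of (Matrix.toLin' A)).symm m)) = _
    simp only [map_add, LinearMap.add_apply]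
    rfl
  map_smul' c B := by
    refine LinearMap.ext fun m => ?_
    show Module.AEval'.of (Matrix.toLin' A) ((Matrix.toLin' (c • B.1))
      ((Module.AEval'.of (Matrix.toLin' A)).symm m)) = _
    simp only [map_smul, LinearMap.smul_apply]
    rfl

lemma centToEnd_bijective : Function.Bijective (centToEnd A) := by
  constructor
  · intro B C h
    ext1
    apply Matrix.toLin'.injective
    refine LinearMap.ext fun m => ?_
    have := congrArg (fun g => (Module.AEval'.of (Matrix.toLin' A)).symm
      (g (Module.AEval'.of (Matrix.toLin' A) m))) h
    simpa [centToEnd, toEnd_apply_of, Matrix.toLin'_apply] using this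
  · intro g
    set e := Module.AEval'.of (Matrix.toLin' A) with he
    set g₀ : (Fin n → ℂ) →ₗ[ℂ] (Fin n → ℂ) :=
      e.symm.toLinearMap ∘ₗ (g.restrictScalars ℂ) ∘ₗ e.toLinearMap with hg₀
    have key : ∀ m, g₀ (Matrix.toLin' A m) = Matrix.toLin' A (g₀ m) := by
      intro m
      have hsm : g ((Polynomial.X : Polynomial ℂ) • e m)
          = (Polynomial.X : Polynomial ℂ) • g (e m) := map_smul g _ _
      simp only [hg₀, LinearMap.comp_apply, LinearEquiv.coe_toLinearMap,
        LinearMap.coe_restrictScalars]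
      calc e.symm (g (e (Matrix.toLin' A m)))
          = e.symm (g ((Polynomial.X : Polynomial ℂ) • e m)) := by
            rw [Module.AEval'.X_smul_of]
        _ = e.symm ((Polynomial.X : Polynomial ℂ) • g (e m)) := by rw [hsm]
        _ = Matrix.toLin' A (e.symm (g (e m))) := by rw [Module.AEval'.of_symm_X_smul]
    refine ⟨⟨LinearMap.toMatrix' g₀, ?_⟩, ?_⟩
    · intro B hB
      rcases hB with rfl
      apply Matrix.toLin'.injective
      rw [Matrix.toLin'_mul, Matrix.toLin'_mul, Matrix.toLin'_toMatrix']
      exact LinearMap.ext fun m => (key m).symm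
    · refine LinearMap.ext fun m => ?_
      show e (Matrix.toLin' (LinearMap.toMatrix' g₀) (e.symm m)) = g m
      rw [Matrix.toLin'_toMatrix']
      simp [hg₀]

lemma aeval_toLin' (p : Polynomial ℂ) :
    aeval (Matrix.toLin' (m := Fin n) A) p = Matrix.toLin' (aeval A p) := by
  have : Matrix.toLin' (m := Fin n) (n := Fin n) (R := ℂ) A = Matrix.toLinAlgEquiv' A := rfl
  rw [this, aeval_algHom_apply (Matrix.toLinAlgEquiv' : Matrix (Fin n) (Fin n) ℂ ≃ₐ[ℂ] _) A p]
  rfl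

lemma isTorsionAE : Module.IsTorsion (Polynomial ℂ) (Module.AEval' (Matrix.toLin' A)) := by
  intro x
  refine ⟨⟨A.charpoly, mem_nonZeroDivisors_of_ne_zero A.charpoly_monic.ne_zero⟩, ?_⟩
  rw [Submonoid.mk_smul]
  apply (Module.AEval'.of (Matrix.toLin' A)).symm.injective
  rw [map_zero, Module.AEval.of_symm_smul, Module.End.smul_def, aeval_toLin',
    A.aeval_self_charpoly]
  simp

local notation "P" => Polynomial ℂ

/-- Multiplication action of the cyclic module `P ⧸ (b)` on itself, as endomorphisms. -/
noncomputable def mulQ (b : P) :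
    (P ⧸ (Submodule.span P {b})) →ₗ[P] Module.End P (P ⧸ (Submodule.span P {b})) :=
  Submodule.liftQ _ (LinearMap.toSpanSingleton P _ LinearMap.id) (by
    rw [Submodule.span_le, Set.singleton_subset_iff, SetLike.mem_coe, LinearMap.mem_ker]
    refine LinearMap.ext fun x => ?_
    obtain ⟨y, rfl⟩ := Submodule.Quotient.mk_surjective _ x
    rw [LinearMap.toSpanSingleton_apply, LinearMap.zero_apply, LinearMap.smul_apply,
      LinearMap.id_apply]
    rw [← Submodule.Quotient.mk_smul, Submodule.Quotient.mk_eq_zero]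
    exact Submodule.mem_span_singleton.mpr ⟨y, by rw [smul_eq_mul, smul_eq_mul, mul_comm]⟩)

@[simp] lemma mulQ_apply_one (b : P) (q : P ⧸ (Submodule.span P {b})) :
    mulQ b q (Submodule.Quotient.mk 1) = q := by
  obtain ⟨y, rfl⟩ := Submodule.Quotient.mk_surjective _ q
  show (y • LinearMap.id) (Submodule.Quotient.mk 1 : P ⧸ (Submodule.span P {b})) = _
  rw [LinearMap.smul_apply, LinearMap.id_apply, ← Submodule.Quotient.mk_smul, smul_eq_mul, mul_one]

/-- A homomorphism between cyclic modules `P ⧸ (b) → P ⧸ (c)` given by multiplication by `z`. -/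
noncomputable def homQ (b c z : P) (hz : b * z ∈ Submodule.span P {c}) :
    (P ⧸ (Submodule.span P {b})) →ₗ[P] (P ⧸ (Submodule.span P {c})) :=
  Submodule.liftQ _ ((Submodule.span P {c}).mkQ.comp (LinearMap.toSpanSingleton P P z)) (by
    rw [Submodule.span_le, Set.singleton_subset_iff, SetLike.mem_coe, LinearMap.mem_ker]
    show Submodule.Quotient.mk (b • z) = (0 : P ⧸ (Submodule.span P {c}))
    rw [Submodule.Quotient.mk_eq_zero]
    simpa using hz)

@[simp] lemma homQ_mk (b c z : P) (hz : b * z ∈ Submodule.span P {c}) (r : P) :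
    homQ b c z hz (Submodule.Quotient.mk r) = Submodule.Quotient.mk (r * z) := rfl


variable {ι : Type} [Fintype ι] [DecidableEq ι]

noncomputable def diagE (a : ι → P) (q : ∀ i, P ⧸ (Submodule.span P {a i})) :
    Module.End P (∀ i, P ⧸ (Submodule.span P {a i})) :=
  LinearMap.pi (fun k => (mulQ (a k) (q k)).comp (LinearMap.proj k))

noncomputable def offE (a : ι → P) (i0 j0 : ι)
    (ψ : (P ⧸ (Submodule.span P {a i0})) →ₗ[P] (P ⧸ (Submodule.span P {a j0}))) :
    Module.End P (∀ i, P ⧸ (Submodule.span P {a i})) :=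
  (LinearMap.single P (fun i => P ⧸ (Submodule.span P {a i})) j0).comp
    (ψ.comp (LinearMap.proj i0))

lemma diagE_add (a : ι → P) (q q' : ∀ i, P ⧸ (Submodule.span P {a i})) :
    diagE a (q + q') = diagE a q + diagE a q' := by
  refine LinearMap.ext fun v => funext fun k => ?_
  show mulQ (a k) (q k + q' k) (v k) = _
  rw [map_add]
  rfl

lemma diagE_smul (a : ι → P) (c : ℂ) (q : ∀ i, P ⧸ (Submodule.span P {a i})) :
    diagE a (c • q) = c • diagE a q := by
  refine LinearMap.ext fun v => funext fun k => ?_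
  show mulQ (a k) (c • q k) (v k) = _
  rw [← algebraMap_smul P c (q k), map_smul, LinearMap.smul_apply, LinearMap.smul_apply,
    Pi.smul_apply, algebraMap_smul]
  rfl

noncomputable def bigMap (a : ι → P) (i0 j0 : ι)
    (ψ : (P ⧸ (Submodule.span P {a i0})) →ₗ[P] (P ⧸ (Submodule.span P {a j0})))
    (ψ' : (P ⧸ (Submodule.span P {a j0})) →ₗ[P] (P ⧸ (Submodule.span P {a i0}))) :
    ((∀ i, P ⧸ (Submodule.span P {a i})) × (ℂ × ℂ)) →ₗ[ℂ]
      Module.End P (∀ i, P ⧸ (Submodule.span P {a i})) where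
  toFun x := diagE a x.1 + x.2.1 • offE a i0 j0 ψ + x.2.2 • offE a j0 i0 ψ'
  map_add' x y := by
    simp only [Prod.fst_add, Prod.snd_add, diagE_add, add_smul]
    module
  map_smul' c x := by
    simp only [Prod.smul_fst, Prod.smul_snd, diagE_smul, smul_eq_mul, mul_smul,
      RingHom.id_apply, smul_add]

set_option maxHeartbeats 1000000 in
lemma bigMap_injective (a : ι → P) (i0 j0 : ι) (hne : i0 ≠ j0)
    (ψ : (P ⧸ (Submodule.span P {a i0})) →ₗ[P] (P ⧸ (Submodule.span P {a j0})))
    (ψ' : (P ⧸ (Submodule.span P {a j0})) →ₗ[P] (P ⧸ (Submodule.span P {a i0})))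
    (hψ : ψ (Submodule.Quotient.mk 1) ≠ 0) (hψ' : ψ' (Submodule.Quotient.mk 1) ≠ 0) :
    Function.Injective (bigMap a i0 j0 ψ ψ') := by
  rw [injective_iff_map_eq_zero]
  rintro ⟨q, s, t⟩ hx
  have hev : ∀ (v : ∀ i, P ⧸ (Submodule.span P {a i})) (k : ι),
      mulQ (a k) (q k) (v k)
        + s • Pi.single (M := fun i => P ⧸ (Submodule.span P {a i})) j0 (ψ (v i0)) k
        + t • Pi.single (M := fun i => P ⧸ (Submodule.span P {a i})) i0 (ψ' (v j0)) k = 0 := by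
    intro v k
    have h0 := congrFun (congrArg (fun (g : Module.End P (∀ i, P ⧸ (Submodule.span P {a i}))) =>
      g v) hx) k
    simpa [bigMap, diagE, offE, LinearMap.single_apply] using h0
  have hq : ∀ k, q k = 0 := by
    intro k
    have h := hev (Pi.single (M := fun i => P ⧸ (Submodule.span P {a i})) k
      (Submodule.Quotient.mk 1)) k
    rw [Pi.single_eq_same, mulQ_apply_one] at h
    have e1 : Pi.single (M := fun i => P ⧸ (Submodule.span P {a i})) j0
        (ψ (Pi.single (M := fun i => P ⧸ (Submodule.span P {a i})) k (Submodule.Quotient.mk 1) i0)) k = 0 := by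
      rcases eq_or_ne k j0 with rfl | hkj
      · simp [Pi.single_eq_of_ne hne]
      · simp [Pi.single_eq_of_ne hkj]
    have e2 : Pi.single (M := fun i => P ⧸ (Submodule.span P {a i})) i0
        (ψ' (Pi.single (M := fun i => P ⧸ (Submodule.span P {a i})) k (Submodule.Quotient.mk 1) j0)) k = 0 := by
      rcases eq_or_ne k i0 with rfl | hki
      · simp [Pi.single_eq_of_ne (Ne.symm hne)]
      · simp [Pi.single_eq_of_ne hki]
    rw [e1, e2, smul_zero, smul_zero, add_zero, add_zero] at h
    exact h
  have hs : s = 0 := by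
    have h := hev (Pi.single (M := fun i => P ⧸ (Submodule.span P {a i})) i0
      (Submodule.Quotient.mk 1)) j0
    simp only [hq, map_zero, LinearMap.zero_apply, Pi.single_eq_same,
      Pi.single_eq_of_ne hne, Pi.single_eq_of_ne (Ne.symm hne), map_zero, Pi.single_zero,
      Pi.zero_apply, smul_zero, zero_add, add_zero] at h
    rcases smul_eq_zero.mp h with h | h
    · exact h
    · exact absurd h hψ
  have ht : t = 0 := by
    have h := hev (Pi.single (M := fun i => P ⧸ (Submodule.span P {a i})) j0
      (Submodule.Quotient.mk 1)) i0
    simp only [hq, map_zero, LinearMap.zero_apply, Pi.single_eq_same,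
      Pi.single_eq_of_ne hne, Pi.single_eq_of_ne (Ne.symm hne), map_zero, Pi.single_zero,
      Pi.zero_apply, smul_zero, zero_add, add_zero] at h
    rcases smul_eq_zero.mp h with h | h
    · exact h
    · exact absurd h hψ'
  have hq0 : q = 0 := funext hq
  rw [Prod.mk.injEq, Prod.mk.injEq]
  exact ⟨hq0, hs, ht⟩

lemma finrank_lt_finrank_end (a : ι → P) (i0 j0 : ι) (hne : i0 ≠ j0)
    (ψ : (P ⧸ (Submodule.span P {a i0})) →ₗ[P] (P ⧸ (Submodule.span P {a j0})))
    (ψ' : (P ⧸ (Submodule.span P {a j0})) →ₗ[P] (P ⧸ (Submodule.span P {a i0})))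
    (hψ : ψ (Submodule.Quotient.mk 1) ≠ 0) (hψ' : ψ' (Submodule.Quotient.mk 1) ≠ 0)
    [FiniteDimensional ℂ (∀ i, P ⧸ (Submodule.span P {a i}))] :
    Module.finrank ℂ (∀ i, P ⧸ (Submodule.span P {a i})) + 2 ≤
      Module.finrank ℂ (Module.End P (∀ i, P ⧸ (Submodule.span P {a i}))) := by
  have : FiniteDimensional ℂ (Module.End P (∀ i, P ⧸ (Submodule.span P {a i}))) :=
    Module.Finite.of_injective
      (LinearMap.restrictScalarsₗ (S := Polynomial ℂ)
        (M := ∀ i, P ⧸ (Submodule.span P {a i})) (N := ∀ i, P ⧸ (Submodule.span P {a i}))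
        (R := ℂ) (R₁ := ℂ))
      (LinearMap.restrictScalars_injective ℂ)
  have h := LinearMap.finrank_le_finrank_of_injective (bigMap_injective a i0 j0 hne ψ ψ' hψ hψ')
  simp only [Module.finrank_prod, Module.finrank_self] at h
  omega

lemma oneHom (b c : P) (hb : Irreducible b) (hbc : Associated b c)
    (e d : ℕ) (he : 1 ≤ e) (hd : 1 ≤ d) :
    ∃ ψ : (P ⧸ (Submodule.span P {b ^ e})) →ₗ[P] (P ⧸ (Submodule.span P {c ^ d})),
      ψ (Submodule.Quotient.mk 1) ≠ 0 := by
  have hcb : (c : P) ^ d ∣ b ^ d := ((hbc.pow_pow (n := d)).symm).dvd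
  have hz : b ^ e * b ^ (d - 1) ∈ Submodule.span P {c ^ d} := by
    have h1 : (b : P) ^ d ∣ b ^ e * b ^ (d - 1) := by
      rw [← pow_add]
      exact pow_dvd_pow b (by omega)
    obtain ⟨a, ha⟩ := hcb.trans h1
    exact Submodule.mem_span_singleton.mpr ⟨a, by rw [smul_eq_mul, mul_comm, ← ha]⟩
  refine ⟨homQ (b ^ e) (c ^ d) (b ^ (d - 1)) hz, ?_⟩
  rw [homQ_mk, one_mul, Ne, Submodule.Quotient.mk_eq_zero]
  intro hmem
  obtain ⟨a, ha⟩ := Submodule.mem_span_singleton.mp hmem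
  have hcd : (c : P) ^ d ∣ b ^ (d - 1) := ⟨a, by rw [← ha, smul_eq_mul, mul_comm]⟩
  have : (b : P) ^ d ∣ b ^ (d - 1) := ((hbc.pow_pow (n := d)).dvd).trans hcd
  have := (pow_dvd_pow_iff hb.ne_zero hb.not_isUnit).mp this
  omega

lemma exists_homs (pi pj : P) (hpi : Irreducible pi) (hpj : Irreducible pj)
    (ei ej : ℕ) (hnc : ¬ IsCoprime (pi ^ ei) (pj ^ ej)) :
    ∃ (ψ : (P ⧸ (Submodule.span P {pi ^ ei})) →ₗ[P] (P ⧸ (Submodule.span P {pj ^ ej})))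
      (ψ' : (P ⧸ (Submodule.span P {pj ^ ej})) →ₗ[P] (P ⧸ (Submodule.span P {pi ^ ei}))),
      ψ (Submodule.Quotient.mk 1) ≠ 0 ∧ ψ' (Submodule.Quotient.mk 1) ≠ 0 := by
  have hei : 1 ≤ ei := by
    rcases Nat.eq_zero_or_pos ei with rfl | h
    · exact absurd (by simpa using isCoprime_one_left (x := pj ^ ej)) hnc
    · exact h
  have hej : 1 ≤ ej := by
    rcases Nat.eq_zero_or_pos ej with rfl | h
    · exact absurd (by simpa using isCoprime_one_right (x := pi ^ ei)) hnc
    · exact h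
  have hassoc : Associated pi pj := by
    by_contra hna
    have hnd : ¬ pi ∣ pj := fun hdvd => hna (hpi.associated_of_dvd hpj hdvd)
    exact hnc (((hpi.coprime_iff_not_dvd).mpr hnd).pow)
  obtain ⟨ψ, hψ⟩ := oneHom pi pj hpi hassoc ei ej hei hej
  obtain ⟨ψ', hψ'⟩ := oneHom pj pi hpj hassoc.symm ej ei hej hei
  exact ⟨ψ, ψ', hψ, hψ'⟩

end

end CentAux

open Polynomial Module in
set_option maxHeartbeats 1000000 in
/-- If the centralizer of `A ∈ M(n,ℂ)` in the matrix algebra has dimension `n`, then it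
coincides with `ℂ[A]`, the unital subalgebra generated by `A`. -/
theorem centralizer_eq_adjoin_of_finrank_eq
    (n : ℕ) (hn : 1 ≤ n) (A : Matrix (Fin n) (Fin n) ℂ)
    (hdim : Module.finrank ℂ
      (Subalgebra.centralizer ℂ ({A} : Set (Matrix (Fin n) (Fin n) ℂ))) = n) :
    Subalgebra.centralizer ℂ ({A} : Set (Matrix (Fin n) (Fin n) ℂ)) =
      Algebra.adjoin ℂ ({A} : Set (Matrix (Fin n) (Fin n) ℂ)) := by
  classical
  have hAZ : A ∈ Subalgebra.centralizer ℂ ({A} : Set (Matrix (Fin n) (Fin n) ℂ)) :=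
    by rw [Subalgebra.mem_centralizer_iff]; rintro g rfl; rfl
  have hle : Algebra.adjoin ℂ ({A} : Set (Matrix (Fin n) (Fin n) ℂ)) ≤
      Subalgebra.centralizer ℂ ({A} : Set (Matrix (Fin n) (Fin n) ℂ)) :=
    Algebra.adjoin_le (Set.singleton_subset_iff.mpr hAZ)
  -- it suffices to produce a cyclic vector
  suffices hcyc : ∃ v : Fin n → ℂ, ∀ w : Fin n → ℂ, ∃ q : Polynomial ℂ,
      (aeval A q).mulVec v = w by
    obtain ⟨v, hv⟩ := hcyc
    let ev : Algebra.adjoin ℂ ({A} : Set (Matrix (Fin n) (Fin n) ℂ)) →ₗ[ℂ] (Fin n → ℂ) :=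
      { toFun := fun X => (X : Matrix (Fin n) (Fin n) ℂ).mulVec v
        map_add' := fun X Y => Matrix.add_mulVec _ _ _
        map_smul' := fun c X => Matrix.smul_mulVec c _ v }
    have hevsurj : Function.Surjective ev := by
      intro w
      obtain ⟨q, hq⟩ := hv w
      refine ⟨⟨aeval A q, ?_⟩, hq⟩
      rw [Algebra.adjoin_singleton_eq_range_aeval]
      exact ⟨q, rfl⟩
    have hfr : n ≤ Module.finrank ℂ (Algebra.adjoin ℂ ({A} : Set (Matrix (Fin n) (Fin n) ℂ))) := by
      have h1 := LinearMap.finrank_range_le ev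
      rw [LinearMap.range_eq_top.mpr hevsurj, finrank_top] at h1
      rwa [Module.finrank_fin_fun] at h1
    exact (Subalgebra.eq_of_le_of_finrank_le hle (le_trans (le_of_eq hdim) hfr)).symm
  -- decompose the `ℂ[X]`-module given by `A` using the structure theorem
  obtain ⟨ι, hfin, p, hirr, e, ⟨iso0⟩⟩ :=
    Module.equiv_directSum_of_isTorsion (R := Polynomial ℂ)
      (M := Module.AEval' (Matrix.toLin' A)) (CentAux.isTorsionAE A)
  haveI := hfin
  let a : ι → Polynomial ℂ := fun i => p i ^ e i
  let F : Module.AEval' (Matrix.toLin' A) ≃ₗ[Polynomial ℂ]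
      (∀ i, Polynomial ℂ ⧸ (Submodule.span (Polynomial ℂ) {a i})) :=
    iso0.trans (DirectSum.linearEquivFunOnFintype (Polynomial ℂ) ι
      (fun i => Polynomial ℂ ⧸ (Submodule.span (Polynomial ℂ) {a i})))
  by_cases hco : Pairwise fun i j => IsCoprime (a i) (a j)
  · -- coprime case : the module is cyclic by CRT
    have hIco : Pairwise (Function.onFun IsCoprime fun i => Ideal.span {a i}) := fun i j hij =>
      (Ideal.isCoprime_span_singleton_iff _ _).mpr (hco hij)
    have hsurj : ∀ w : (∀ i, Polynomial ℂ ⧸ Ideal.span {a i}), ∃ r : Polynomial ℂ,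
        ∀ i, Ideal.Quotient.mk (Ideal.span {a i}) r = w i := by
      intro w
      obtain ⟨y, hy⟩ := Ideal.quotientInfToPiQuotient_surj hIco w
      obtain ⟨r, rfl⟩ := Ideal.Quotient.mk_surjective y
      exact ⟨r, fun i => by
        rw [← Ideal.quotientInfToPiQuotient_mk' (fun i => Ideal.span {a i}) r i, hy]⟩
    let v1 : ∀ i, Polynomial ℂ ⧸ Submodule.span (Polynomial ℂ) {a i} :=
      fun _ => Submodule.Quotient.mk 1
    refine ⟨(Module.AEval'.of (Matrix.toLin' A)).symm (F.symm v1), fun w => ?_⟩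
    obtain ⟨r, hr⟩ := hsurj (F (Module.AEval'.of (Matrix.toLin' A) w))
    refine ⟨r, ?_⟩
    have h1 : r • F.symm v1 = Module.AEval'.of (Matrix.toLin' A) w := by
      apply F.injective
      rw [map_smul, F.apply_symm_apply]
      funext i
      have : (r • v1) i = Submodule.Quotient.mk r := by
        show r • (Submodule.Quotient.mk 1 :
          Polynomial ℂ ⧸ Submodule.span (Polynomial ℂ) {a i}) = _
        rw [← Submodule.Quotient.mk_smul, smul_eq_mul, mul_one]
      rw [Pi.smul_apply] at this ⊢
      rw [this]
      exact hr i
    have h2 := congrArg (Module.AEval'.of (Matrix.toLin' A)).symm h1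
    rw [Module.AEval.of_symm_smul, LinearEquiv.symm_apply_apply] at h2
    rw [Module.End.smul_def, CentAux.aeval_toLin', Matrix.toLin'_apply] at h2
    exact h2
  · -- non-coprime case : dimension of the centralizer would exceed `n`
    exfalso
    rw [Pairwise] at hco
    push_neg at hco
    obtain ⟨i, j, hne, hnc⟩ := hco
    obtain ⟨ψ, ψ', hψ, hψ'⟩ :=
      CentAux.exists_homs (p i) (p j) (hirr i) (hirr j) (e i) (e j) hnc
    haveI : FiniteDimensional ℂ
        (∀ i, Polynomial ℂ ⧸ (Submodule.span (Polynomial ℂ) {a i})) :=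
      Module.Finite.equiv (F.restrictScalars ℂ)
    have hbound := CentAux.finrank_lt_finrank_end a i j hne ψ ψ' hψ hψ'
    have hNdim : Module.finrank ℂ
        (∀ i, Polynomial ℂ ⧸ (Submodule.span (Polynomial ℂ) {a i})) = n := by
      rw [← (F.restrictScalars ℂ).finrank_eq]
      rw [← (Module.AEval'.of (Matrix.toLin' A)).finrank_eq]
      exact Module.finrank_fin_fun ℂ
    have hZdim : Module.finrank ℂ (Module.End (Polynomial ℂ)
        (Module.AEval' (Matrix.toLin' A))) = n := by
      rw [← (LinearEquiv.ofBijective (CentAux.centToEnd A)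
        (CentAux.centToEnd_bijective A)).finrank_eq]
      exact hdim
    have hEnd2 : Module.finrank ℂ (Module.End (Polynomial ℂ)
          (Module.AEval' (Matrix.toLin' A)))
        = Module.finrank ℂ (Module.End (Polynomial ℂ)
          (∀ i, Polynomial ℂ ⧸ (Submodule.span (Polynomial ℂ) {a i}))) :=
      (F.conj.restrictScalars ℂ).finrank_eq
    omega
end
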